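/- arXiv:2206.11211 — 2 statements merged into one kernel-verified Lean document; each statement's English description precedes it below -/
import Mathlib

section
/- For every κ ∈ (0,∞) and all μ, ν ∈ M₊(Ω) one has HK_κ²(μ,ν) = √(‖μ‖·‖ν‖) · HK_κ²(μ/‖μ‖, ν/‖ν‖) + (√‖μ‖ − √‖ν‖)² (with the convention μ/‖μ‖ = 0 when μ = 0, and likewise for ν), and moreover HK_κ²(μ,ν) ≤ ‖μ‖ + ‖ν‖. -/
open scoped Classical
open MeasureTheory ENNReal Filter Topology Real
open scoped NNReal

noncomputable section

/-- The entropy function `φ` with `φ(s) = s log s - s + 1` for `s > 0`, `φ(0) = 1`. -/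
def phiEnt (s : ℝ≥0∞) : ℝ≥0∞ :=
  if s = 0 then 1 else if s = ⊤ then ⊤
  else ENNReal.ofReal (s.toReal * Real.log s.toReal - s.toReal + 1)

/-- Kullback–Leibler divergence of `σ` with respect to `μ`. -/
def KLdiv {X : Type*} [MeasurableSpace X] (σ μ : Measure X) : ℝ≥0∞ :=
  if σ ≪ μ then ∫⁻ x, phiEnt (σ.rnDeriv μ x) ∂μ else ⊤

/-- The cost `ĉ_κ(x,y) = -2 log cos(d(x,y)/κ)` for `d(x,y) ≤ κπ/2`, `∞` otherwise. -/
def hkCost {X : Type*} [PseudoMetricSpace X] (κ : ℝ) (x y : X) : ℝ≥0∞ :=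
  if dist x y < κ * π / 2 then ENNReal.ofReal (-2 * Real.log (Real.cos (dist x y / κ))) else ⊤

/-- Squared Hellinger–Kantorovich distance with length scale `κ`. -/
def HK2 {X : Type*} [MeasurableSpace X] [PseudoMetricSpace X] (κ : ℝ) (μ ν : Measure X) : ℝ≥0∞ :=
  ⨅ (γ : Measure (X × X)) (_ : IsFiniteMeasure γ),
    (∫⁻ p, hkCost κ p.1 p.2 ∂γ) + KLdiv (γ.map Prod.fst) μ + KLdiv (γ.map Prod.snd) ν

abbrev Ed (d : ℕ) : Type := EuclideanSpace ℝ (Fin d)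

/-- Truncated cosine `Cos(s) = cos(min(|s|, π/2))`. -/
def tcos (s : ℝ) : ℝ := Real.cos (min |s| (π / 2))

/-- Squared Hellinger distance. -/
def Hell2 {X : Type*} [MeasurableSpace X] (μ ν : Measure X) : ℝ≥0∞ :=
  ∫⁻ x, ENNReal.ofReal ((Real.sqrt ((μ.rnDeriv (μ + ν)) x).toReal
      - Real.sqrt ((ν.rnDeriv (μ + ν)) x).toReal) ^ 2) ∂(μ + ν)

/-- Squared Wasserstein-2 distance (value `∞` when no coupling exists). -/
def W2 {X : Type*} [MeasurableSpace X] [PseudoMetricSpace X] (μ ν : Measure X) : ℝ≥0∞ :=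
  ⨅ (γ : Measure (X × X)) (_ : γ.map Prod.fst = μ) (_ : γ.map Prod.snd = ν),
    ∫⁻ p, ENNReal.ofReal (dist p.1 p.2 ^ 2) ∂γ

/-- Borel σ-algebra on the space of finite measures with the weak* topology. -/
instance (X : Type*) [TopologicalSpace X] [MeasurableSpace X] [OpensMeasurableSpace X] :
    MeasurableSpace (FiniteMeasure X) := borel _

instance (X : Type*) [TopologicalSpace X] [MeasurableSpace X] [OpensMeasurableSpace X] :
    BorelSpace (FiniteMeasure X) := ⟨rfl⟩

/-- The set `𝔠` of nonnegative measures of total mass at most `M`. -/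
def cSet (X : Type*) [TopologicalSpace X] [MeasurableSpace X] [OpensMeasurableSpace X]
    (M : ℝ≥0) : Set (FiniteMeasure X) := {μ | μ.mass ≤ M}

/-- The barycenter functional `J_{Λ,κ}`. -/
def JCont {X : Type*} [MeasurableSpace X] [PseudoMetricSpace X] [OpensMeasurableSpace X]
    {M : ℝ≥0} (Λ : Measure (cSet X M)) (κ : ℝ) (ν : Measure X) : ℝ≥0∞ :=
  ∫⁻ μ : cSet X M, HK2 κ ((μ : FiniteMeasure X) : Measure X) ν ∂Λ

/-- Barycenter functional for the limit scales `κ∞ = 0` (Hellinger) and `κ∞ = ∞` (Wasserstein). -/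
def JContGen {X : Type*} [MeasurableSpace X] [PseudoMetricSpace X] [OpensMeasurableSpace X]
    {M : ℝ≥0} (Λ : Measure (cSet X M)) (κinf : ℝ≥0∞) (ν : Measure X) : ℝ≥0∞ :=
  if κinf = 0 then ∫⁻ μ : cSet X M, Hell2 ((μ : FiniteMeasure X) : Measure X) ν ∂Λ
  else if κinf = ⊤ then ∫⁻ μ : cSet X M, W2 ((μ : FiniteMeasure X) : Measure X) ν ∂Λ
  else ∫⁻ μ : cSet X M, HK2 κinf.toReal ((μ : FiniteMeasure X) : Measure X) ν ∂Λ

/-- The barycenter functional `J_{ρ,κ}` for Dirac input measures distributed as `ρ`. -/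
def JDirac {X : Type*} [MeasurableSpace X] [PseudoMetricSpace X]
    (ρ : Measure X) (κ : ℝ) (ν : Measure X) : ℝ≥0∞ :=
  ∫⁻ x, HK2 κ (Measure.dirac x) ν ∂ρ

/-- The dual constraint function `F_{ρ,κ}(ψ)`. -/
def Fcon {X : Type*} [MeasurableSpace X] [PseudoMetricSpace X]
    (ρ : Measure X) (κ : ℝ) (ψ : X → ℝ) (y : X) : ℝ :=
  ∫ x, tcos (dist x y / κ) ^ 2 / (1 - ψ x) ∂ρ

/-- Admissibility for the dual problem `(D_{ρ,κ})`. -/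
def DualAdm {X : Type*} [MeasurableSpace X] [PseudoMetricSpace X]
    (ρ : Measure X) (κ : ℝ) (ψ : X → ℝ) : Prop :=
  Continuous ψ ∧ (∀ x, ψ x < 1) ∧ ∀ y, Fcon ρ κ ψ y ≤ 1

/-- Optimality for the dual problem `(D_{ρ,κ})`. -/
def DualOpt {X : Type*} [MeasurableSpace X] [PseudoMetricSpace X]
    (ρ : Measure X) (κ : ℝ) (ψ : X → ℝ) : Prop :=
  DualAdm ρ κ ψ ∧ ∀ ψ' : X → ℝ, DualAdm ρ κ ψ' → ∫ x, ψ' x ∂ρ ≤ ∫ x, ψ x ∂ρ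

/-- `ν` minimizes `J_{ρ,κ}` over the nonnegative finite measures. -/
def PrimalMin {X : Type*} [MeasurableSpace X] [PseudoMetricSpace X]
    (ρ : Measure X) (κ : ℝ) (ν : Measure X) : Prop :=
  IsFiniteMeasure ν ∧ ∀ ν' : Measure X, IsFiniteMeasure ν' → JDirac ρ κ ν ≤ JDirac ρ κ ν'

/-- Support of a measure. -/
def msupport {X : Type*} [TopologicalSpace X] [MeasurableSpace X] (μ : Measure X) : Set X :=
  {x | ∀ U ∈ nhds x, 0 < μ U}

/-- A measure is discrete if it is a countable sum of weighted Dirac measures. -/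
def IsDiscreteHK {X : Type*} [MeasurableSpace X] (μ : Measure X) : Prop :=
  ∃ (x : ℕ → X) (c : ℕ → ℝ≥0∞), μ = Measure.sum fun n => c n • Measure.dirac (x n)

/-- The dual constraint set `Q_κ`. -/
def QSet (X : Type*) [PseudoMetricSpace X] (κ : ℝ) : Set ((X → ℝ) × (X → ℝ)) :=
  {p | Continuous p.1 ∧ Continuous p.2 ∧ (∀ x, p.1 x ≤ 1) ∧ (∀ y, p.2 y ≤ 1) ∧
    ∀ x y, tcos (dist x y / κ) ^ 2 ≤ (1 - p.1 x) * (1 - p.2 y)}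


section AuxHK

/-! ### Auxiliary lemmas -/

def phiR (s : ℝ) : ℝ := s * Real.log s - s + 1

lemma phiR_nonneg {s : ℝ} (hs : 0 ≤ s) : 0 ≤ phiR s := by
  rcases eq_or_lt_of_le hs with rfl | h
  · simp [phiR]
  · have h1 : Real.log s⁻¹ ≤ s⁻¹ - 1 := Real.log_le_sub_one_of_pos (by positivity)
    rw [Real.log_inv] at h1
    have h2 := mul_le_mul_of_nonneg_left h1 h.le
    have hs1 : s * s⁻¹ = 1 := mul_inv_cancel₀ h.ne'
    unfold phiR; nlinarith

lemma phiR_scale {a : ℝ} (ha : 0 < a) {s : ℝ} (hs : 0 ≤ s) :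
    phiR (a * s) = a * phiR s + a * s * Real.log a + (1 - a) := by
  rcases eq_or_lt_of_le hs with rfl | h
  · simp [phiR]
  · unfold phiR; rw [Real.log_mul ha.ne' h.ne']; ring

lemma phiEnt_eq {s : ℝ≥0∞} (hs : s ≠ ⊤) : phiEnt s = ENNReal.ofReal (phiR s.toReal) := by
  rcases eq_or_ne s 0 with rfl | h0
  · simp [phiEnt, phiR]
  · rw [phiEnt, if_neg h0, if_neg hs]; rfl

lemma measurable_phiEnt : Measurable phiEnt := by
  unfold phiEnt
  refine Measurable.ite (measurableSet_eq) measurable_const ?_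
  refine Measurable.ite (measurableSet_eq) measurable_const ?_
  exact ENNReal.measurable_ofReal.comp
    (((ENNReal.measurable_toReal.mul
      (Real.measurable_log.comp ENNReal.measurable_toReal)).sub
      ENNReal.measurable_toReal).add_const 1)

lemma KLdiv_zero_left {X : Type*} [MeasurableSpace X] (μ : Measure X) :
    KLdiv 0 μ = μ Set.univ := by
  rw [KLdiv, if_pos (Measure.AbsolutelyContinuous.zero μ)]
  calc ∫⁻ x, phiEnt ((0 : Measure X).rnDeriv μ x) ∂μ = ∫⁻ _, 1 ∂μ := by
        refine lintegral_congr_ae ?_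
        filter_upwards [Measure.rnDeriv_zero μ] with x hx
        simp [hx, phiEnt]
    _ = μ Set.univ := lintegral_one

lemma KLdiv_self_zero {X : Type*} [MeasurableSpace X] :
    KLdiv (0 : Measure X) 0 = 0 := by
  rw [KLdiv, if_pos (Measure.AbsolutelyContinuous.zero 0)]; simp

variable {X : Type*} [MeasurableSpace X]

lemma map_fst_univ (γ : Measure (X × X)) : (γ.map Prod.fst) Set.univ = γ Set.univ := by
  rw [Measure.map_apply measurable_fst MeasurableSet.univ]; simp

lemma map_snd_univ (γ : Measure (X × X)) : (γ.map Prod.snd) Set.univ = γ Set.univ := by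
  rw [Measure.map_apply measurable_snd MeasurableSet.univ]; simp

lemma phiEnt_point_scale {a s : ℝ≥0∞} (ha0 : a ≠ 0) (hat : a ≠ ⊤) (hst : s ≠ ⊤) :
    phiEnt (a * s) + (a + (a * ENNReal.ofReal (-Real.log a.toReal)) * s)
      = a * phiEnt s + ((a * ENNReal.ofReal (Real.log a.toReal)) * s + 1) := by
  set ar := a.toReal with har
  set sr := s.toReal with hsr
  have har0 : 0 < ar := ENNReal.toReal_pos ha0 hat
  have hsr0 : 0 ≤ sr := ENNReal.toReal_nonneg
  have hea : a = ENNReal.ofReal ar := (ENNReal.ofReal_toReal hat).symm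
  have hes : s = ENNReal.ofReal sr := (ENNReal.ofReal_toReal hst).symm
  have hmt : a * s ≠ ⊤ := ENNReal.mul_ne_top hat hst
  have hkey : phiR (ar * sr) + ar = ar * phiR sr + ar * sr * Real.log ar + 1 := by
    rw [phiR_scale har0 hsr0]; ring
  rcases le_total 0 (Real.log ar) with hl | hl
  · have hneg : ENNReal.ofReal (-Real.log ar) = 0 := by
      simp [ENNReal.ofReal_of_nonpos, neg_nonpos.mpr hl]
    have hnn1 : 0 ≤ ar * Real.log ar * sr := mul_nonneg (mul_nonneg har0.le hl) hsr0
    have ht : (a * ENNReal.ofReal (Real.log ar)) * s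
        = ENNReal.ofReal (ar * Real.log ar * sr) := by
      rw [hea, hes, ← ENNReal.ofReal_mul har0.le,
        ← ENNReal.ofReal_mul (mul_nonneg har0.le hl)]
    rw [hneg, mul_zero, zero_mul, add_zero, ht]
    calc phiEnt (a * s) + a = ENNReal.ofReal (phiR (ar * sr)) + ENNReal.ofReal ar := by
          rw [phiEnt_eq hmt, ENNReal.toReal_mul, ← har, ← hsr, ← hea]
      _ = ENNReal.ofReal (phiR (ar * sr) + ar) :=
          (ENNReal.ofReal_add (phiR_nonneg (mul_nonneg har0.le hsr0)) har0.le).symm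
      _ = ENNReal.ofReal (ar * phiR sr + (ar * Real.log ar * sr + 1)) := by
          rw [hkey]; ring_nf
      _ = ENNReal.ofReal (ar * phiR sr)
            + (ENNReal.ofReal (ar * Real.log ar * sr) + ENNReal.ofReal 1) := by
          rw [ENNReal.ofReal_add (mul_nonneg har0.le (phiR_nonneg hsr0)) (by linarith),
            ENNReal.ofReal_add hnn1 (by norm_num)]
      _ = a * phiEnt s + (ENNReal.ofReal (ar * Real.log ar * sr) + 1) := by
          rw [ENNReal.ofReal_mul har0.le, ← hea, phiEnt_eq hst, ← hsr, ENNReal.ofReal_one]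
  · have hn : 0 ≤ -Real.log ar := neg_nonneg.mpr hl
    have hpos : ENNReal.ofReal (Real.log ar) = 0 := by
      simp [ENNReal.ofReal_of_nonpos, hl]
    have hnn2 : 0 ≤ ar * -Real.log ar * sr := mul_nonneg (mul_nonneg har0.le hn) hsr0
    have ht : (a * ENNReal.ofReal (-Real.log ar)) * s
        = ENNReal.ofReal (ar * -Real.log ar * sr) := by
      rw [hea, hes, ← ENNReal.ofReal_mul har0.le,
        ← ENNReal.ofReal_mul (mul_nonneg har0.le hn)]
    rw [hpos, mul_zero, zero_mul, zero_add, ht]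
    calc phiEnt (a * s) + (a + ENNReal.ofReal (ar * -Real.log ar * sr))
        = ENNReal.ofReal (phiR (ar * sr))
            + (ENNReal.ofReal ar + ENNReal.ofReal (ar * -Real.log ar * sr)) := by
          rw [phiEnt_eq hmt, ENNReal.toReal_mul, ← har, ← hsr, ← hea]
      _ = ENNReal.ofReal (phiR (ar * sr) + (ar + ar * -Real.log ar * sr)) := by
          rw [ENNReal.ofReal_add (phiR_nonneg (mul_nonneg har0.le hsr0)) (by linarith),
            ENNReal.ofReal_add har0.le hnn2]
      _ = ENNReal.ofReal (ar * phiR sr + 1) := by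
          congr 1; nlinarith [hkey]
      _ = a * phiEnt s + 1 := by
          rw [ENNReal.ofReal_add (mul_nonneg har0.le (phiR_nonneg hsr0)) zero_le_one,
            ENNReal.ofReal_mul har0.le, ← hea, phiEnt_eq hst, ← hsr, ENNReal.ofReal_one]

lemma lint_KLS (μ : Measure X) [IsFiniteMeasure μ] {f : X → ℝ≥0∞} (hf : Measurable f)
    (hfae : ∀ᵐ x ∂μ, f x ≠ ⊤) {a : ℝ≥0∞} (ha0 : a ≠ 0) (hat : a ≠ ⊤) :
    (∫⁻ x, phiEnt (a * f x) ∂μ)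
        + (a * μ Set.univ + (a * ENNReal.ofReal (-Real.log a.toReal)) * ∫⁻ x, f x ∂μ)
      = a * (∫⁻ x, phiEnt (f x) ∂μ)
        + ((a * ENNReal.ofReal (Real.log a.toReal)) * (∫⁻ x, f x ∂μ) + μ Set.univ) := by
  have hmg : Measurable fun x => phiEnt (a * f x) :=
    measurable_phiEnt.comp (hf.const_mul a)
  have hmp : Measurable fun x => phiEnt (f x) := measurable_phiEnt.comp hf
  have hL : (∫⁻ x, phiEnt (a * f x)
        + (a + (a * ENNReal.ofReal (-Real.log a.toReal)) * f x) ∂μ)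
      = (∫⁻ x, phiEnt (a * f x) ∂μ)
        + (a * μ Set.univ + (a * ENNReal.ofReal (-Real.log a.toReal)) * ∫⁻ x, f x ∂μ) := by
    rw [lintegral_add_left hmg, lintegral_add_left (measurable_const),
      lintegral_const, lintegral_const_mul _ hf]
  have hR : (∫⁻ x, a * phiEnt (f x)
        + ((a * ENNReal.ofReal (Real.log a.toReal)) * f x + 1) ∂μ)
      = a * (∫⁻ x, phiEnt (f x) ∂μ)
        + ((a * ENNReal.ofReal (Real.log a.toReal)) * (∫⁻ x, f x ∂μ) + μ Set.univ) := by
    rw [lintegral_add_left (hmp.const_mul a), lintegral_add_left (hf.const_mul _),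
      lintegral_const_mul _ hmp, lintegral_const_mul _ hf, lintegral_one]
  rw [← hL, ← hR]
  refine lintegral_congr_ae ?_
  filter_upwards [hfae] with x hx
  exact phiEnt_point_scale ha0 hat hx

lemma KLdiv_smul_eq (σ μ : Measure X) [IsFiniteMeasure σ] [IsFiniteMeasure μ]
    (hAC : σ ≪ μ) {a : ℝ≥0∞} (ha0 : a ≠ 0) (hat : a ≠ ⊤) :
    KLdiv (a • σ) μ
        + (a * μ Set.univ + (a * ENNReal.ofReal (-Real.log a.toReal)) * σ Set.univ)
      = a * KLdiv σ μ
        + ((a * ENNReal.ofReal (Real.log a.toReal)) * σ Set.univ + μ Set.univ) := by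
  have hAC' : a • σ ≪ μ := hAC.smul_left a
  rw [KLdiv, if_pos hAC', KLdiv, if_pos hAC]
  have h1 : (∫⁻ x, phiEnt ((a • σ).rnDeriv μ x) ∂μ)
      = ∫⁻ x, phiEnt (a * σ.rnDeriv μ x) ∂μ := by
    refine lintegral_congr_ae ?_
    filter_upwards [Measure.rnDeriv_smul_left_of_ne_top σ μ hat] with x hx
    rw [hx]; rfl
  rw [h1, ← Measure.lintegral_rnDeriv hAC]
  exact lint_KLS μ (Measure.measurable_rnDeriv σ μ)
    (by filter_upwards [Measure.rnDeriv_lt_top σ μ] with x hx using hx.ne) ha0 hat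

lemma KLdiv_inv_smul (σ μ : Measure X) [IsFiniteMeasure σ] [IsFiniteMeasure μ]
    {b : ℝ≥0∞} (hb0 : b ≠ 0) (hbt : b ≠ ⊤) :
    KLdiv σ (b⁻¹ • μ) = b⁻¹ * KLdiv (b • σ) μ := by
  by_cases hAC : σ ≪ μ
  · have h1 : σ ≪ b⁻¹ • μ :=
      hAC.trans (Measure.absolutelyContinuous_smul (ENNReal.inv_ne_zero.mpr hbt))
    have h2 : b • σ ≪ μ := hAC.smul_left b
    rw [KLdiv, if_pos h1, KLdiv, if_pos h2, lintegral_smul_measure]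
    congr 1
    refine lintegral_congr_ae ?_
    have e1 : σ.rnDeriv (b⁻¹ • μ) =ᵐ[μ] b • σ.rnDeriv μ := by
      have h := Measure.rnDeriv_smul_right_of_ne_top σ μ (r := b⁻¹)
        (ENNReal.inv_ne_zero.mpr hbt) (ENNReal.inv_ne_top.mpr hb0)
      simpa [inv_inv] using h
    have e2 : (b • σ).rnDeriv μ =ᵐ[μ] b • σ.rnDeriv μ :=
      Measure.rnDeriv_smul_left_of_ne_top σ μ hbt
    filter_upwards [e1, e2] with x h1x h2x
    rw [h1x, h2x]
  · have h1 : ¬ σ ≪ b⁻¹ • μ := fun h => hAC (h.trans Measure.smul_absolutelyContinuous)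
    have h2 : ¬ b • σ ≪ μ := fun h =>
      hAC ((Measure.absolutelyContinuous_smul hb0).trans h)
    rw [KLdiv, if_neg h1, KLdiv, if_neg h2,
      ENNReal.mul_top (ENNReal.inv_ne_zero.mpr hbt)]

lemma KLdiv_smul_toReal (σ μ : Measure X) [IsFiniteMeasure σ] [IsFiniteMeasure μ]
    (hAC : σ ≪ μ) {a : ℝ≥0∞} (ha0 : a ≠ 0) (hat : a ≠ ⊤) (hK : KLdiv σ μ ≠ ⊤) :
    KLdiv (a • σ) μ ≠ ⊤ ∧
    (KLdiv (a • σ) μ).toReal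
      = a.toReal * (KLdiv σ μ).toReal + a.toReal * (σ Set.univ).toReal * Real.log a.toReal
        + (1 - a.toReal) * (μ Set.univ).toReal := by
  have E := KLdiv_smul_eq σ μ hAC ha0 hat
  have hμt : μ Set.univ ≠ ⊤ := (measure_lt_top μ _).ne
  have hσt : σ Set.univ ≠ ⊤ := (measure_lt_top σ _).ne
  have hRfin : a * KLdiv σ μ
      + ((a * ENNReal.ofReal (Real.log a.toReal)) * σ Set.univ + μ Set.univ) ≠ ⊤ := by
    apply ENNReal.add_ne_top.mpr
    constructor
    · exact ENNReal.mul_ne_top hat hK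
    · exact ENNReal.add_ne_top.mpr
        ⟨ENNReal.mul_ne_top (ENNReal.mul_ne_top hat ENNReal.ofReal_ne_top) hσt, hμt⟩
  have hLfin : KLdiv (a • σ) μ ≠ ⊤ := by
    intro h
    rw [h, top_add] at E
    exact hRfin E.symm
  refine ⟨hLfin, ?_⟩
  have hFin1 : a * μ Set.univ + (a * ENNReal.ofReal (-Real.log a.toReal)) * σ Set.univ ≠ ⊤ :=
    ENNReal.add_ne_top.mpr ⟨ENNReal.mul_ne_top hat hμt,
      ENNReal.mul_ne_top (ENNReal.mul_ne_top hat ENNReal.ofReal_ne_top) hσt⟩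
  have hT := congrArg ENNReal.toReal E
  rw [ENNReal.toReal_add hLfin hFin1, ENNReal.toReal_add (ENNReal.mul_ne_top hat hK)
      (ENNReal.add_ne_top.mpr
        ⟨ENNReal.mul_ne_top (ENNReal.mul_ne_top hat ENNReal.ofReal_ne_top) hσt, hμt⟩),
    ENNReal.toReal_add (ENNReal.mul_ne_top hat hμt)
      (ENNReal.mul_ne_top (ENNReal.mul_ne_top hat ENNReal.ofReal_ne_top) hσt),
    ENNReal.toReal_add
      (ENNReal.mul_ne_top (ENNReal.mul_ne_top hat ENNReal.ofReal_ne_top) hσt) hμt] at hT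
  simp only [ENNReal.toReal_mul, ENNReal.toReal_ofReal'] at hT
  have hmax : max (Real.log a.toReal) 0 - max (-Real.log a.toReal) 0 = Real.log a.toReal := by
    rcases le_total (Real.log a.toReal) 0 with h | h
    · rw [max_eq_right h, max_eq_left (by linarith)]; ring
    · rw [max_eq_left h, max_eq_right (by linarith)]; ring
  have h2 := congrArg (fun t => a.toReal * t * (σ Set.univ).toReal) hmax
  simp only [mul_sub, sub_mul] at h2
  linarith [hT, h2]

lemma KLdiv_smul_top (σ μ : Measure X) [IsFiniteMeasure σ] [IsFiniteMeasure μ]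
    (hAC : σ ≪ μ) {a : ℝ≥0∞} (ha0 : a ≠ 0) (hat : a ≠ ⊤) (hK : KLdiv σ μ = ⊤) :
    KLdiv (a • σ) μ = ⊤ := by
  have E := KLdiv_smul_eq σ μ hAC ha0 hat
  rw [hK, ENNReal.mul_top ha0, top_add] at E
  by_contra h
  exact (ENNReal.add_ne_top.mpr ⟨h, ENNReal.add_ne_top.mpr
    ⟨ENNReal.mul_ne_top hat (measure_lt_top μ _).ne,
     ENNReal.mul_ne_top (ENNReal.mul_ne_top hat ENNReal.ofReal_ne_top)
       (measure_lt_top σ _).ne⟩⟩) E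

lemma KL_pair (μ ν σ τ : Measure X) [IsFiniteMeasure μ] [IsFiniteMeasure ν]
    [IsFiniteMeasure σ] [IsFiniteMeasure τ]
    (hc : σ Set.univ = τ Set.univ) (hm0 : μ Set.univ ≠ 0) (hn0 : ν Set.univ ≠ 0) :
    KLdiv ((ENNReal.ofReal (Real.sqrt ((μ Set.univ).toReal * (ν Set.univ).toReal))) • σ) μ
      + KLdiv ((ENNReal.ofReal (Real.sqrt ((μ Set.univ).toReal * (ν Set.univ).toReal))) • τ) ν
    = ENNReal.ofReal (Real.sqrt ((μ Set.univ).toReal * (ν Set.univ).toReal))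
        * (KLdiv σ ((μ Set.univ)⁻¹ • μ) + KLdiv τ ((ν Set.univ)⁻¹ • ν))
      + ENNReal.ofReal ((Real.sqrt (μ Set.univ).toReal - Real.sqrt (ν Set.univ).toReal) ^ 2) := by
  have hmt : μ Set.univ ≠ ⊤ := (measure_lt_top μ _).ne
  have hnt : ν Set.univ ≠ ⊤ := (measure_lt_top ν _).ne
  set m := μ Set.univ with hmdef
  set n := ν Set.univ with hndef
  set mr := m.toReal with hmrdef
  set nr := n.toReal with hnrdef
  have hmr : 0 < mr := ENNReal.toReal_pos hm0 hmt
  have hnr : 0 < nr := ENNReal.toReal_pos hn0 hnt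
  set lamr := Real.sqrt (mr * nr) with hlamrdef
  have hlr : 0 < lamr := Real.sqrt_pos.mpr (by positivity)
  set lam := ENNReal.ofReal lamr with hlamdef
  have hlam0 : lam ≠ 0 := (ENNReal.ofReal_pos.mpr hlr).ne'
  have hlamt : lam ≠ ⊤ := ENNReal.ofReal_ne_top
  have hlamtr : lam.toReal = lamr := ENNReal.toReal_ofReal hlr.le
  rw [KLdiv_inv_smul σ μ hm0 hmt, KLdiv_inv_smul τ ν hn0 hnt]
  by_cases hACσ : σ ≪ μ
  swap
  · have e1 : KLdiv (lam • σ) μ = ⊤ := by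
      rw [KLdiv, if_neg (fun h => hACσ ((Measure.absolutelyContinuous_smul hlam0).trans h))]
    have e2 : KLdiv (m • σ) μ = ⊤ := by
      rw [KLdiv, if_neg (fun h => hACσ ((Measure.absolutelyContinuous_smul hm0).trans h))]
    rw [e1, e2, top_add, ENNReal.mul_top (ENNReal.inv_ne_zero.mpr hmt), top_add,
      ENNReal.mul_top hlam0, top_add]
  by_cases hACτ : τ ≪ ν
  swap
  · have e1 : KLdiv (lam • τ) ν = ⊤ := by
      rw [KLdiv, if_neg (fun h => hACτ ((Measure.absolutelyContinuous_smul hlam0).trans h))]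
    have e2 : KLdiv (n • τ) ν = ⊤ := by
      rw [KLdiv, if_neg (fun h => hACτ ((Measure.absolutelyContinuous_smul hn0).trans h))]
    rw [e1, e2, add_top, ENNReal.mul_top (ENNReal.inv_ne_zero.mpr hnt), add_top,
      ENNReal.mul_top hlam0, top_add]
  by_cases hKσ : KLdiv σ μ = ⊤
  · rw [KLdiv_smul_top σ μ hACσ hlam0 hlamt hKσ, KLdiv_smul_top σ μ hACσ hm0 hmt hKσ,
      top_add, ENNReal.mul_top (ENNReal.inv_ne_zero.mpr hmt), top_add,
      ENNReal.mul_top hlam0, top_add]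
  by_cases hKτ : KLdiv τ ν = ⊤
  · rw [KLdiv_smul_top τ ν hACτ hlam0 hlamt hKτ, KLdiv_smul_top τ ν hACτ hn0 hnt hKτ,
      add_top, ENNReal.mul_top (ENNReal.inv_ne_zero.mpr hnt), add_top,
      ENNReal.mul_top hlam0, top_add]
  obtain ⟨hA, hAr⟩ := KLdiv_smul_toReal σ μ hACσ hlam0 hlamt hKσ
  obtain ⟨hB, hBr⟩ := KLdiv_smul_toReal τ ν hACτ hlam0 hlamt hKτ
  obtain ⟨hPm, hPmr⟩ := KLdiv_smul_toReal σ μ hACσ hm0 hmt hKσ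
  obtain ⟨hPn, hPnr⟩ := KLdiv_smul_toReal τ ν hACτ hn0 hnt hKτ
  have hLfin : KLdiv (lam • σ) μ + KLdiv (lam • τ) ν ≠ ⊤ := ENNReal.add_ne_top.mpr ⟨hA, hB⟩
  have hRfin : lam * (m⁻¹ * KLdiv (m • σ) μ + n⁻¹ * KLdiv (n • τ) ν)
      + ENNReal.ofReal ((Real.sqrt mr - Real.sqrt nr) ^ 2) ≠ ⊤ :=
    ENNReal.add_ne_top.mpr ⟨ENNReal.mul_ne_top hlamt (ENNReal.add_ne_top.mpr
      ⟨ENNReal.mul_ne_top (ENNReal.inv_ne_top.mpr hm0) hPm,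
       ENNReal.mul_ne_top (ENNReal.inv_ne_top.mpr hn0) hPn⟩), ENNReal.ofReal_ne_top⟩
  refine (ENNReal.toReal_eq_toReal_iff' hLfin hRfin).mp ?_
  rw [ENNReal.toReal_add hA hB,
    ENNReal.toReal_add (ENNReal.mul_ne_top hlamt (ENNReal.add_ne_top.mpr
      ⟨ENNReal.mul_ne_top (ENNReal.inv_ne_top.mpr hm0) hPm,
       ENNReal.mul_ne_top (ENNReal.inv_ne_top.mpr hn0) hPn⟩)) ENNReal.ofReal_ne_top,
    ENNReal.toReal_mul,
    ENNReal.toReal_add (ENNReal.mul_ne_top (ENNReal.inv_ne_top.mpr hm0) hPm)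
      (ENNReal.mul_ne_top (ENNReal.inv_ne_top.mpr hn0) hPn),
    ENNReal.toReal_mul, ENNReal.toReal_mul, ENNReal.toReal_inv, ENNReal.toReal_inv,
    ENNReal.toReal_ofReal (sq_nonneg _)]
  rw [hAr, hBr, hPmr, hPnr, hlamtr, ← hc]
  set cr := (σ Set.univ).toReal
  set Kr := (KLdiv σ μ).toReal
  set Kr' := (KLdiv τ ν).toReal
  have hlog : Real.log lamr = (Real.log mr + Real.log nr) / 2 := by
    rw [hlamrdef, Real.log_sqrt (by positivity), Real.log_mul hmr.ne' hnr.ne']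
  have hsq : (Real.sqrt mr - Real.sqrt nr) ^ 2 = mr + nr - 2 * lamr := by
    have h1 : Real.sqrt mr * Real.sqrt nr = lamr := (Real.sqrt_mul hmr.le nr).symm
    have h2 : Real.sqrt mr ^ 2 = mr := Real.sq_sqrt hmr.le
    have h3 : Real.sqrt nr ^ 2 = nr := Real.sq_sqrt hnr.le
    nlinarith [h1, h2, h3]
  rw [hsq, hlog]
  have e1 : (μ Set.univ).toReal = mr := rfl
  have e2 : (ν Set.univ).toReal = nr := rfl
  have e3 : m.toReal = mr := rfl
  have e4 : n.toReal = nr := rfl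
  simp only [e1, e2, e3, e4]
  field_simp
  ring

variable [PseudoMetricSpace X]

lemma HK2_le_mass (κ : ℝ) (μ ν : Measure X) : HK2 κ μ ν ≤ μ Set.univ + ν Set.univ := by
  have h := iInf₂_le (f := fun (γ : Measure (X × X)) (_ : IsFiniteMeasure γ) =>
    (∫⁻ p, hkCost κ p.1 p.2 ∂γ) + KLdiv (γ.map Prod.fst) μ + KLdiv (γ.map Prod.snd) ν)
    (0 : Measure (X × X)) inferInstance
  simpa [HK2, Measure.map_zero, KLdiv_zero_left] using h

lemma HK2_zero_left (κ : ℝ) (ν : Measure X) : HK2 κ 0 ν = ν Set.univ := by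
  refine le_antisymm (by simpa using HK2_le_mass κ 0 ν) ?_
  refine le_iInf fun γ => le_iInf fun hγ => ?_
  by_cases hAC : γ.map Prod.fst ≪ (0 : Measure X)
  · have h1 : (γ.map Prod.fst) Set.univ = 0 := hAC (by simp)
    have hγ0 : γ = 0 := by
      rw [map_fst_univ] at h1; exact Measure.measure_univ_eq_zero.mp h1
    subst hγ0
    simp [Measure.map_zero, KLdiv_self_zero, KLdiv_zero_left]
  · have h2 : KLdiv (γ.map Prod.fst) (0 : Measure X) = ⊤ := by rw [KLdiv, if_neg hAC]
    simp [h2]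

lemma HK2_zero_right (κ : ℝ) (μ : Measure X) : HK2 κ μ 0 = μ Set.univ := by
  refine le_antisymm (by simpa using HK2_le_mass κ μ 0) ?_
  refine le_iInf fun γ => le_iInf fun hγ => ?_
  by_cases hAC : γ.map Prod.snd ≪ (0 : Measure X)
  · have h1 : (γ.map Prod.snd) Set.univ = 0 := hAC (by simp)
    have hγ0 : γ = 0 := by
      rw [map_snd_univ] at h1; exact Measure.measure_univ_eq_zero.mp h1
    subst hγ0
    simp [Measure.map_zero, KLdiv_self_zero, KLdiv_zero_left]
  · have h2 : KLdiv (γ.map Prod.snd) (0 : Measure X) = ⊤ := by rw [KLdiv, if_neg hAC]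
    simp [h2]

lemma isFiniteMeasure_smul {Y : Type*} [MeasurableSpace Y] (γ : Measure Y) [IsFiniteMeasure γ]
    {c : ℝ≥0∞} (hc : c ≠ ⊤) : IsFiniteMeasure (c • γ) :=
  ⟨by rw [Measure.smul_apply, smul_eq_mul]
      exact ENNReal.mul_lt_top hc.lt_top (measure_lt_top γ _)⟩

lemma HK2_val_smul (κ : ℝ) (μ ν : Measure X) [IsFiniteMeasure μ] [IsFiniteMeasure ν]
    (hm0 : μ Set.univ ≠ 0) (hn0 : ν Set.univ ≠ 0)
    (γ : Measure (X × X)) [IsFiniteMeasure γ] :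
    (∫⁻ p, hkCost κ p.1 p.2
        ∂((ENNReal.ofReal (Real.sqrt ((μ Set.univ).toReal * (ν Set.univ).toReal))) • γ))
      + KLdiv (((ENNReal.ofReal (Real.sqrt ((μ Set.univ).toReal * (ν Set.univ).toReal)))
          • γ).map Prod.fst) μ
      + KLdiv (((ENNReal.ofReal (Real.sqrt ((μ Set.univ).toReal * (ν Set.univ).toReal)))
          • γ).map Prod.snd) ν
    = ENNReal.ofReal (Real.sqrt ((μ Set.univ).toReal * (ν Set.univ).toReal))
        * ((∫⁻ p, hkCost κ p.1 p.2 ∂γ) + KLdiv (γ.map Prod.fst) ((μ Set.univ)⁻¹ • μ)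
            + KLdiv (γ.map Prod.snd) ((ν Set.univ)⁻¹ • ν))
      + ENNReal.ofReal ((Real.sqrt (μ Set.univ).toReal - Real.sqrt (ν Set.univ).toReal) ^ 2) := by
  set lam := ENNReal.ofReal (Real.sqrt ((μ Set.univ).toReal * (ν Set.univ).toReal)) with hlam
  have hmapf : (lam • γ).map Prod.fst = lam • (γ.map Prod.fst) := Measure.map_smul _ _ _
  have hmaps : (lam • γ).map Prod.snd = lam • (γ.map Prod.snd) := Measure.map_smul _ _ _
  have hcost : (∫⁻ p, hkCost κ p.1 p.2 ∂(lam • γ)) = lam * ∫⁻ p, hkCost κ p.1 p.2 ∂γ :=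
    lintegral_smul_measure _ _
  have hfinf : IsFiniteMeasure (γ.map Prod.fst) :=
    ⟨by rw [map_fst_univ]; exact measure_lt_top γ _⟩
  have hfins : IsFiniteMeasure (γ.map Prod.snd) :=
    ⟨by rw [map_snd_univ]; exact measure_lt_top γ _⟩
  have hpair := KL_pair μ ν (γ.map Prod.fst) (γ.map Prod.snd)
    (by rw [map_fst_univ, map_snd_univ]) hm0 hn0
  rw [← hlam] at hpair
  rw [hmapf, hmaps, hcost, add_assoc, hpair]
  ring

lemma HK2_rescale (κ : ℝ) (μ ν : Measure X) [IsFiniteMeasure μ] [IsFiniteMeasure ν]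
    (hm0 : μ Set.univ ≠ 0) (hn0 : ν Set.univ ≠ 0) :
    HK2 κ μ ν
      = ENNReal.ofReal (Real.sqrt ((μ Set.univ).toReal * (ν Set.univ).toReal))
          * HK2 κ ((μ Set.univ)⁻¹ • μ) ((ν Set.univ)⁻¹ • ν)
        + ENNReal.ofReal ((Real.sqrt (μ Set.univ).toReal - Real.sqrt (ν Set.univ).toReal) ^ 2) := by
  have hmt : μ Set.univ ≠ ⊤ := (measure_lt_top μ _).ne
  have hnt : ν Set.univ ≠ ⊤ := (measure_lt_top ν _).ne
  set lam := ENNReal.ofReal (Real.sqrt ((μ Set.univ).toReal * (ν Set.univ).toReal)) with hlam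
  have hlr : 0 < Real.sqrt ((μ Set.univ).toReal * (ν Set.univ).toReal) :=
    Real.sqrt_pos.mpr (mul_pos (ENNReal.toReal_pos hm0 hmt) (ENNReal.toReal_pos hn0 hnt))
  have hlam0 : lam ≠ 0 := (ENNReal.ofReal_pos.mpr hlr).ne'
  have hlamt : lam ≠ ⊤ := ENNReal.ofReal_ne_top
  set C := ENNReal.ofReal ((Real.sqrt (μ Set.univ).toReal - Real.sqrt (ν Set.univ).toReal) ^ 2)
    with hC
  set F := fun γ : Measure (X × X) =>
    (∫⁻ p, hkCost κ p.1 p.2 ∂γ) + KLdiv (γ.map Prod.fst) ((μ Set.univ)⁻¹ • μ)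
      + KLdiv (γ.map Prod.snd) ((ν Set.univ)⁻¹ • ν) with hF
  have hdist : lam * HK2 κ ((μ Set.univ)⁻¹ • μ) ((ν Set.univ)⁻¹ • ν) + C
      = ⨅ (γ : Measure (X × X)) (_ : IsFiniteMeasure γ), (lam * F γ + C) := by
    unfold HK2
    rw [ENNReal.mul_iInf_of_ne hlam0 hlamt, ENNReal.iInf_add]
    exact iInf_congr fun γ => by rw [ENNReal.mul_iInf_of_ne hlam0 hlamt, ENNReal.iInf_add]
  rw [hdist]
  refine le_antisymm ?_ ?_
  · refine le_iInf fun γ => le_iInf fun hγ => ?_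
    have : IsFiniteMeasure (lam • γ) := isFiniteMeasure_smul γ hlamt
    have h1 : HK2 κ μ ν ≤ (∫⁻ p, hkCost κ p.1 p.2 ∂(lam • γ))
        + KLdiv ((lam • γ).map Prod.fst) μ + KLdiv ((lam • γ).map Prod.snd) ν :=
      iInf₂_le (lam • γ) this
    rw [HK2_val_smul κ μ ν hm0 hn0 γ] at h1
    exact h1
  · refine le_iInf fun γ => le_iInf fun hγ => ?_
    have hinv : IsFiniteMeasure (lam⁻¹ • γ) :=
      isFiniteMeasure_smul γ (ENNReal.inv_ne_top.mpr hlam0)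
    have hsm : lam • (lam⁻¹ • γ) = γ := by
      rw [smul_smul, ENNReal.mul_inv_cancel hlam0 hlamt, one_smul]
    have h2 : (⨅ (γ' : Measure (X × X)) (_ : IsFiniteMeasure γ'), (lam * F γ' + C))
        ≤ lam * F (lam⁻¹ • γ) + C := iInf₂_le (lam⁻¹ • γ) hinv
    refine h2.trans ?_
    have h3 := HK2_val_smul κ μ ν hm0 hn0 (lam⁻¹ • γ)
    rw [hsm] at h3
    simp only [hF]
    rw [← hlam, ← hC] at h3
    exact h3.ge

end AuxHK

/-- Mass-rescaling identity and upper bound for the Hellinger--Kantorovich distance. -/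
theorem hk_mass_rescaling {d : ℕ} (Ω : Set (Ed d)) (hΩ₁ : IsCompact Ω) (hΩ₂ : Convex ℝ Ω)
    (hΩ₃ : (interior Ω).Nonempty) (κ : ℝ) (hκ : 0 < κ)
    (μ ν : Measure ↥Ω) [IsFiniteMeasure μ] [IsFiniteMeasure ν] :
    HK2 κ μ ν
      = ENNReal.ofReal (Real.sqrt ((μ Set.univ).toReal * (ν Set.univ).toReal))
          * HK2 κ ((μ Set.univ)⁻¹ • μ) ((ν Set.univ)⁻¹ • ν)
        + ENNReal.ofReal ((Real.sqrt (μ Set.univ).toReal - Real.sqrt (ν Set.univ).toReal) ^ 2)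
    ∧ HK2 κ μ ν ≤ μ Set.univ + ν Set.univ := by
  refine ⟨?_, HK2_le_mass κ μ ν⟩
  by_cases hm0 : μ Set.univ = 0
  · have hμ : μ = 0 := Measure.measure_univ_eq_zero.mp hm0
    subst hμ
    rw [HK2_zero_left]
    simp only [Measure.coe_zero, Pi.zero_apply, ENNReal.toReal_zero, Real.sqrt_zero, zero_mul,
      ENNReal.ofReal_zero, zero_add, zero_sub, neg_sq]
    rw [Real.sq_sqrt ENNReal.toReal_nonneg,
      ENNReal.ofReal_toReal (measure_lt_top ν _).ne]
  by_cases hn0 : ν Set.univ = 0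
  · have hν : ν = 0 := Measure.measure_univ_eq_zero.mp hn0
    subst hν
    rw [HK2_zero_right]
    simp only [Measure.coe_zero, Pi.zero_apply, ENNReal.toReal_zero, Real.sqrt_zero, mul_zero,
      ENNReal.ofReal_zero, zero_add, zero_mul, sub_zero]
    rw [Real.sq_sqrt ENNReal.toReal_nonneg,
      ENNReal.ofReal_toReal (measure_lt_top μ _).ne]
  exact HK2_rescale κ μ ν hm0 hn0

end
end

section
/- Let ρ ∈ P(Ω) and κ ∈ (0,∞). A pair (ν, ψ) ∈ M₊(Ω) × C(Ω) with ψ < 1 and F_{ρ,κ}(ψ) ≤ 1 on Ω is optimal (i.e. ν minimizes J_{ρ,κ} over M₊(Ω) and ψ maximizes ∫_Ω ψ dρ among all admissible dual variables) if and only if ψ(x) = 1 − √( ∫_Ω Cos²(|x−y|/κ) dν(y) ) for ρ-a.e. x ∈ Ω and F_{ρ,κ}(ψ)(y) = 1 for ν-a.e. y ∈ Ω. -/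
open scoped Classical
open MeasureTheory ENNReal Filter Topology Real
open scoped NNReal

noncomputable section

/-- A measure is discrete if it is a countable sum of weighted Dirac measures. -/
def IsDiscreteMeasure {X : Type*} [MeasurableSpace X] (μ : Measure X) : Prop :=
  ∃ (x : ℕ → X) (c : ℕ → ℝ≥0∞), μ = Measure.sum fun n => c n • Measure.dirac (x n)

namespace HKaux

/-- the entropy function on the reals -/
def phir (t : ℝ) : ℝ := t * Real.log t - t + 1

lemma L1 {u v : ℝ} (hu : 0 ≤ u) (hv : 0 < v) : 0 ≤ u * (Real.log u - Real.log v) - u + v := by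
  rcases eq_or_lt_of_le hu with h | h
  · simp [← h]; positivity
  · have hlog : Real.log (v / u) ≤ v / u - 1 := Real.log_le_sub_one_of_pos (by positivity)
    have : Real.log (v / u) = Real.log v - Real.log u := Real.log_div (ne_of_gt hv) (ne_of_gt h)
    rw [this] at hlog
    have := mul_le_mul_of_nonneg_left hlog hu
    have hvu : u * (v / u - 1) = v - u := by field_simp
    nlinarith

lemma phir_nonneg {t : ℝ} (ht : 0 ≤ t) : 0 ≤ phir t := by
  have := L1 ht one_pos
  simpa [phir, Real.log_one] using this

lemma phir_zero : phir 0 = 1 := by simp [phir]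

lemma phiEnt_eq {a : ℝ≥0∞} (ha : a ≠ ⊤) : phiEnt a = ENNReal.ofReal (phir a.toReal) := by
  rcases eq_or_ne a 0 with h | h
  · simp [phiEnt, h, phir]
  · rw [phiEnt, if_neg h, if_neg ha]; rfl

lemma phiEnt_ofReal {t : ℝ} (ht : 0 ≤ t) : phiEnt (ENNReal.ofReal t) = ENNReal.ofReal (phir t) := by
  rw [phiEnt_eq ofReal_ne_top, ENNReal.toReal_ofReal ht]

lemma measurable_phiEnt : Measurable phiEnt := by
  unfold phiEnt
  apply Measurable.ite (MeasurableSet.singleton 0) measurable_const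
  apply Measurable.ite (MeasurableSet.singleton ⊤) measurable_const
  apply ENNReal.measurable_ofReal.comp
  have h1 : Measurable fun s : ℝ≥0∞ => s.toReal := ENNReal.measurable_toReal
  exact ((h1.mul (Real.measurable_log.comp h1)).sub h1).add measurable_const

/-- the kernel -/
def kf {X : Type*} [PseudoMetricSpace X] (κ : ℝ) (x y : X) : ℝ := tcos (dist x y / κ) ^ 2

section Kernel

variable {X : Type*} [PseudoMetricSpace X] {κ : ℝ}

lemma tcos_nonneg (s : ℝ) : 0 ≤ tcos s := by
  apply Real.cos_nonneg_of_mem_Icc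
  constructor
  · have : (0:ℝ) ≤ min |s| (π/2) := le_min (abs_nonneg s) (by positivity)
    linarith [Real.pi_pos]
  · exact min_le_right _ _

lemma tcos_le_one (s : ℝ) : tcos s ≤ 1 := Real.cos_le_one _

lemma kf_nonneg (x y : X) : 0 ≤ kf κ x y := sq_nonneg _

lemma kf_le_one (x y : X) : kf κ x y ≤ 1 := by
  exact pow_le_one₀ (tcos_nonneg _) (tcos_le_one _)

lemma continuous_tcos : Continuous tcos :=
  Real.continuous_cos.comp ((continuous_abs).min continuous_const)

lemma continuous_kf : Continuous fun p : X × X => kf κ p.1 p.2 := by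
  apply Continuous.pow
  exact continuous_tcos.comp (continuous_dist.div_const κ)

lemma kf_eq_of_lt (hκ : 0 < κ) {x y : X} (h : dist x y < κ * π / 2) :
    kf κ x y = Real.cos (dist x y / κ) ^ 2 := by
  have h0 : 0 ≤ dist x y / κ := div_nonneg dist_nonneg hκ.le
  have h1 : dist x y / κ ≤ π / 2 := by
    rw [div_le_iff₀ hκ] at *
    nlinarith [h]
  unfold kf tcos
  rw [abs_of_nonneg h0, min_eq_left h1]

lemma kf_pos_of_lt (hκ : 0 < κ) {x y : X} (h : dist x y < κ * π / 2) :
    0 < kf κ x y := by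
  rw [kf_eq_of_lt hκ h]
  have h0 : 0 ≤ dist x y / κ := div_nonneg dist_nonneg hκ.le
  have h1 : dist x y / κ < π / 2 := by rw [div_lt_iff₀ hκ]; nlinarith
  have : 0 < Real.cos (dist x y / κ) := by
    apply Real.cos_pos_of_mem_Ioo
    constructor <;> [linarith [Real.pi_pos]; exact h1]
  positivity

lemma kf_eq_zero_of_ge (hκ : 0 < κ) {x y : X} (h : ¬ dist x y < κ * π / 2) :
    kf κ x y = 0 := by
  push_neg at h
  have h1 : π / 2 ≤ dist x y / κ := by rw [le_div_iff₀ hκ]; nlinarith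
  have h0 : 0 ≤ dist x y / κ := div_nonneg dist_nonneg hκ.le
  unfold kf tcos
  rw [abs_of_nonneg h0, min_eq_right h1, Real.cos_pi_div_two]
  ring

lemma hkCost_eq_of_lt (hκ : 0 < κ) {x y : X} (h : dist x y < κ * π / 2) :
    hkCost κ x y = ENNReal.ofReal (- Real.log (kf κ x y)) := by
  rw [hkCost, if_pos h, kf_eq_of_lt hκ h, Real.log_pow]
  congr 1
  push_cast
  ring

lemma hkCost_eq_top (hκ : 0 < κ) {x y : X} (h : ¬ dist x y < κ * π / 2) :
    hkCost κ x y = ⊤ := by rw [hkCost, if_neg h]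

lemma measurable_hkCost_pair {X : Type*} [MeasurableSpace X] [MetricSpace X] [BorelSpace X]
    [SecondCountableTopology X] (κ : ℝ) : Measurable fun p : X × X => hkCost κ p.1 p.2 := by
  unfold hkCost
  apply Measurable.ite
  · exact measurableSet_lt (continuous_dist.measurable) measurable_const
  · apply ENNReal.measurable_ofReal.comp
    apply Measurable.const_mul
    exact Real.measurable_log.comp (Real.continuous_cos.measurable.comp
      ((continuous_dist.measurable).div_const κ))
  · exact measurable_const

lemma measurable_hkCost_right {X : Type*} [MeasurableSpace X] [MetricSpace X] [BorelSpace X]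
    [SecondCountableTopology X] (κ : ℝ) (x : X) : Measurable fun y : X => hkCost κ x y :=
  (measurable_hkCost_pair κ).comp (measurable_const.prodMk measurable_id)

end Kernel

end HKaux

namespace HKaux

section Dirac

variable {X : Type*} [MeasurableSpace X] [MeasurableSingletonClass X]

lemma eq_smul_dirac_of_ac {σ : Measure X} {x : X}
    (h : σ ≪ Measure.dirac x) : σ = σ Set.univ • Measure.dirac x := by
  have hxc : σ {x}ᶜ = 0 := by
    apply h
    simp [Measure.dirac_apply' _ (MeasurableSet.singleton x).compl]
  ext s hs
  rw [Measure.smul_apply, Measure.dirac_apply' _ hs, smul_eq_mul]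
  by_cases hx : x ∈ s
  · have h1 : σ Set.univ ≤ σ s + σ sᶜ := by
      rw [← measure_union (disjoint_compl_right) hs.compl]
      simp
    have h2 : σ sᶜ ≤ σ {x}ᶜ := measure_mono (by simp [Set.subset_compl_comm, hx,
      Set.singleton_subset_iff])
    have h3 : σ sᶜ = 0 := le_antisymm (h2.trans hxc.le) zero_le
    have h4 : σ s = σ Set.univ := le_antisymm (measure_mono (Set.subset_univ _))
      (by rw [h3, add_zero] at h1; exact h1)
    simp [h4, Set.indicator_of_mem hx]
  · have h2 : σ s ≤ σ {x}ᶜ := measure_mono (by simpa [Set.subset_compl_comm,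
      Set.singleton_subset_iff] using hx)
    have : σ s = 0 := le_antisymm (h2.trans hxc.le) zero_le
    simp [this, Set.indicator_of_notMem hx]

lemma KLdiv_smul_dirac (x : X) {c : ℝ≥0∞} (hc : c ≠ ⊤) :
    KLdiv (c • Measure.dirac x) (Measure.dirac x) = phiEnt c := by
  rw [KLdiv, if_pos Measure.smul_absolutelyContinuous]
  have h1 : (c • Measure.dirac x).rnDeriv (Measure.dirac x) =ᶠ[ae (Measure.dirac x)]
      fun _ => c := by
    have h2 := Measure.rnDeriv_smul_left_of_ne_top (Measure.dirac x) (Measure.dirac x) hc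
    filter_upwards [h2, Measure.rnDeriv_self (Measure.dirac x)] with y hy hy'
    simp [hy, hy', Pi.smul_apply, smul_eq_mul]
  calc ∫⁻ y, phiEnt ((c • Measure.dirac x).rnDeriv (Measure.dirac x) y) ∂(Measure.dirac x)
      = ∫⁻ _, phiEnt c ∂(Measure.dirac x) := by
        apply lintegral_congr_ae
        filter_upwards [h1] with y hy
        rw [hy]
    _ = phiEnt c := by rw [lintegral_const]; simp

lemma KLdiv_zero_left (μ : Measure X) : KLdiv 0 μ = μ Set.univ := by
  rw [KLdiv, if_pos (Measure.AbsolutelyContinuous.mk fun s _ _ => by simp)]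
  calc ∫⁻ y, phiEnt ((0 : Measure X).rnDeriv μ y) ∂μ = ∫⁻ _, phiEnt 0 ∂μ := by
        apply lintegral_congr_ae
        filter_upwards [Measure.rnDeriv_zero μ] with y hy
        rw [hy]; rfl
    _ = μ Set.univ := by rw [lintegral_const]; simp [phiEnt]

lemma KLdiv_withDensity (ν : Measure X) [SigmaFinite ν] {g : X → ℝ≥0∞} (hg : Measurable g) :
    KLdiv (ν.withDensity g) ν = ∫⁻ y, phiEnt (g y) ∂ν := by
  rw [KLdiv, if_pos (withDensity_absolutelyContinuous ν g)]
  apply lintegral_congr_ae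
  filter_upwards [Measure.rnDeriv_withDensity ν hg] with y hy
  rw [hy]

end Dirac

end HKaux

namespace HKaux

section Formula

variable {X : Type*} [MetricSpace X] [MeasurableSpace X] [BorelSpace X]
  [SecondCountableTopology X] [CompactSpace X]

lemma integrable_of_continuous (μ : Measure X) [IsFiniteMeasure μ] {f : X → ℝ}
    (hf : Continuous f) : Integrable f μ :=
  hf.integrable_of_hasCompactSupport (HasCompactSupport.of_compactSpace f)

/-- the function C(x) = ∫ k(x,y) dν(y) -/
def Cre {X : Type*} [PseudoMetricSpace X] [MeasurableSpace X] (κ : ℝ) (ν : Measure X)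
    (x : X) : ℝ := ∫ y, kf κ x y ∂ν

lemma continuous_kf_right {X : Type*} [PseudoMetricSpace X] (κ : ℝ) (x : X) :
    Continuous (fun y : X => kf κ x y) := by
  unfold kf
  exact (continuous_tcos.comp ((continuous_const.dist continuous_id).div_const κ)).pow 2

lemma continuous_kf_left {X : Type*} [PseudoMetricSpace X] (κ : ℝ) (y : X) :
    Continuous (fun x : X => kf κ x y) := by
  unfold kf
  exact (continuous_tcos.comp ((continuous_id.dist continuous_const).div_const κ)).pow 2

lemma integrable_kf_right (κ : ℝ) (ν : Measure X) [IsFiniteMeasure ν] (x : X) :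
    Integrable (fun y => kf κ x y) ν :=
  integrable_of_continuous ν (continuous_kf_right κ x)

lemma integrable_kf_left (κ : ℝ) (ρ : Measure X) [IsFiniteMeasure ρ] (y : X) :
    Integrable (fun x => kf κ x y) ρ :=
  integrable_of_continuous ρ (continuous_kf_left κ y)

lemma Cre_nonneg (κ : ℝ) (ν : Measure X) (x : X) : 0 ≤ Cre κ ν x :=
  integral_nonneg fun y => kf_nonneg x y

lemma Cre_le (κ : ℝ) (ν : Measure X) [IsFiniteMeasure ν] (x : X) :
    Cre κ ν x ≤ (ν Set.univ).toReal := by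
  have h := integral_mono (integrable_kf_right κ ν x) (integrable_const (1:ℝ))
    (fun y => kf_le_one x y)
  unfold Cre
  simpa [Measure.real] using h

lemma continuous_Cre (κ : ℝ) (ν : Measure X) [IsFiniteMeasure ν] :
    Continuous fun x => Cre κ ν x := by
  apply continuous_of_dominated (bound := fun _ => (1:ℝ))
  · exact fun x => (integrable_kf_right κ ν x).aestronglyMeasurable
  · intro x
    filter_upwards with y
    rw [Real.norm_eq_abs, abs_of_nonneg (kf_nonneg x y)]
    exact kf_le_one x y
  · exact integrable_const 1
  · filter_upwards with y
    exact continuous_kf_left κ y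

lemma sqrt_Cre_le (κ : ℝ) (ν : Measure X) [IsFiniteMeasure ν] (x : X) :
    2 * Real.sqrt (Cre κ ν x) ≤ 1 + (ν Set.univ).toReal := by
  set N := (ν Set.univ).toReal with hN
  have hN0 : 0 ≤ N := ENNReal.toReal_nonneg
  have h1 : Real.sqrt (Cre κ ν x) ≤ Real.sqrt N := Real.sqrt_le_sqrt (Cre_le κ ν x)
  have h2 : Real.sqrt N ^ 2 = N := Real.sq_sqrt hN0
  nlinarith [Real.sqrt_nonneg N, Real.sqrt_nonneg (Cre κ ν x), sq_nonneg (1 - Real.sqrt N)]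

lemma ptid {s c : ℝ} (hs : 0 < s) (hc0 : 0 ≤ c) :
    s * c * (- Real.log c) + phir (s * c) = s * c * Real.log s - s * c + 1 := by
  rcases hc0.eq_or_lt with h | h
  · simp [← h, phir]
  · have : Real.log (s * c) = Real.log s + Real.log c := Real.log_mul hs.ne' h.ne'
    unfold phir
    rw [this]
    ring

lemma HK2_dirac_le {κ : ℝ} (hκ : 0 < κ) (x : X) (ν : Measure X) [IsFiniteMeasure ν] :
    HK2 κ (Measure.dirac x) ν ≤
      ENNReal.ofReal (1 + (ν Set.univ).toReal - 2 * Real.sqrt (Cre κ ν x)) := by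
  set N := (ν Set.univ).toReal with hN
  have hN0 : 0 ≤ N := ENNReal.toReal_nonneg
  set Cx := Cre κ ν x with hCx
  have hC0 : 0 ≤ Cx := Cre_nonneg κ ν x
  rcases hC0.eq_or_lt with hC | hC
  · -- C = 0 : use γ = 0
    have h0 : HK2 κ (Measure.dirac x) ν ≤
        (∫⁻ p : X × X, hkCost κ p.1 p.2 ∂(0 : Measure (X × X))) +
          KLdiv ((0 : Measure (X × X)).map Prod.fst) (Measure.dirac x) +
          KLdiv ((0 : Measure (X × X)).map Prod.snd) ν := by
      exact iInf₂_le (0 : Measure (X × X))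
        (by infer_instance : IsFiniteMeasure (0 : Measure (X × X)))
    rw [lintegral_zero_measure, Measure.map_zero, Measure.map_zero, KLdiv_zero_left,
      KLdiv_zero_left, zero_add] at h0
    refine h0.trans ?_
    have hc0 : Cx = 0 := hC.symm
    rw [hc0, Real.sqrt_zero, mul_zero, sub_zero, ENNReal.ofReal_add zero_le_one hN0,
      ENNReal.ofReal_one, hN, ENNReal.ofReal_toReal (measure_ne_top ν _)]
    simp
  · -- C > 0 : explicit near-optimal coupling
    set s : ℝ := (Real.sqrt Cx)⁻¹ with hs_def
    have hsq : 0 < Real.sqrt Cx := Real.sqrt_pos.mpr hC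
    have hs : 0 < s := inv_pos.mpr hsq
    set g : X → ℝ≥0∞ := fun y => ENNReal.ofReal (s * kf κ x y) with hg_def
    have hg : Measurable g := by
      apply ENNReal.measurable_ofReal.comp
      exact (continuous_const.mul (continuous_kf.comp (Continuous.prodMk_right x))).measurable
    set σ : Measure X := ν.withDensity g with hσ_def
    have hσfin : IsFiniteMeasure σ := by
      constructor
      rw [hσ_def, withDensity_apply _ MeasurableSet.univ, Measure.restrict_univ]
      calc ∫⁻ y, g y ∂ν ≤ ∫⁻ _, ENNReal.ofReal s ∂ν := by
            apply lintegral_mono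
            intro y
            exact ENNReal.ofReal_le_ofReal (by nlinarith [kf_le_one (κ := κ) x y, kf_nonneg (κ := κ) x y])
        _ = ENNReal.ofReal s * ν Set.univ := lintegral_const _
        _ < ⊤ := ENNReal.mul_lt_top ofReal_lt_top (measure_lt_top ν _)
    set γ : Measure (X × X) := (Measure.dirac x).prod σ with hγ_def
    have hγfin : IsFiniteMeasure γ := by rw [hγ_def]; infer_instance
    have hle : HK2 κ (Measure.dirac x) ν ≤
        (∫⁻ p, hkCost κ p.1 p.2 ∂γ) + KLdiv (γ.map Prod.fst) (Measure.dirac x) +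
          KLdiv (γ.map Prod.snd) ν := iInf₂_le γ hγfin
    -- compute σ's mass
    have hmass : σ Set.univ = ENNReal.ofReal (Real.sqrt Cx) := by
      rw [hσ_def, withDensity_apply _ MeasurableSet.univ, Measure.restrict_univ]
      have : ∫⁻ y, g y ∂ν = ENNReal.ofReal (∫ y, s * kf κ x y ∂ν) := by
        rw [ofReal_integral_eq_lintegral_ofReal
          ((integrable_kf_right κ ν x).const_mul s)
          (Filter.Eventually.of_forall fun y => mul_nonneg hs.le (kf_nonneg x y))]
      rw [this, integral_const_mul]
      congr 1
      have hxx : (∫ a, kf κ x a ∂ν) = Cx := rfl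
      rw [hxx, hs_def, inv_mul_eq_div, Real.div_sqrt]
    -- the cost term plus KL2
    have hcost : ∫⁻ p, hkCost κ p.1 p.2 ∂γ =
        ∫⁻ y, g y * hkCost κ x y ∂ν := by
      rw [hγ_def, lintegral_prod _ (measurable_hkCost_pair κ).aemeasurable,
        lintegral_dirac x (fun a => ∫⁻ y, hkCost κ a y ∂σ), hσ_def,
        lintegral_withDensity_eq_lintegral_mul ν hg (measurable_hkCost_right κ x)]
      rfl
    have hKL2 : KLdiv (γ.map Prod.snd) ν = ∫⁻ y, phiEnt (g y) ∂ν := by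
      rw [hγ_def, Measure.map_snd_prod]
      simp only [measure_univ, one_smul]
      rw [hσ_def, KLdiv_withDensity ν hg]
    have hKL1 : KLdiv (γ.map Prod.fst) (Measure.dirac x) =
        ENNReal.ofReal (phir (Real.sqrt Cx)) := by
      rw [hγ_def, Measure.map_fst_prod, hmass,
        KLdiv_smul_dirac x ofReal_ne_top, phiEnt_ofReal (Real.sqrt_nonneg _)]
    -- pointwise identity for cost + KL2
    have hptw : ∀ y, g y * hkCost κ x y + phiEnt (g y) =
        ENNReal.ofReal (s * kf κ x y * Real.log s - s * kf κ x y + 1) := by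
      intro y
      have hknn : 0 ≤ kf κ x y := kf_nonneg x y
      have hsk : 0 ≤ s * kf κ x y := by positivity
      rw [hg_def]
      by_cases h : dist x y < κ * π / 2
      · have hkpos : 0 < kf κ x y := kf_pos_of_lt hκ h
        have hklog : 0 ≤ - Real.log (kf κ x y) := by
          simp only [neg_nonneg]
          exact Real.log_nonpos hknn (kf_le_one x y)
        rw [hkCost_eq_of_lt hκ h, ← ENNReal.ofReal_mul hsk,
          phiEnt_ofReal hsk, ← ENNReal.ofReal_add (by positivity) (phir_nonneg hsk),
          ptid hs hknn]
      · have hk0 : kf κ x y = 0 := kf_eq_zero_of_ge hκ h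
        simp only [hkCost_eq_top hκ h, hk0, mul_zero, ENNReal.ofReal_zero, zero_mul,
          zero_add, zero_sub]
        simp [phiEnt]
    have hsum : (∫⁻ p, hkCost κ p.1 p.2 ∂γ) + KLdiv (γ.map Prod.snd) ν =
        ENNReal.ofReal ((s * Real.log s) * Cx - s * Cx + N) := by
      rw [hcost, hKL2, ← lintegral_add_left (f := fun y => g y * hkCost κ x y) (hg.mul (measurable_hkCost_right κ x))]
      have : ∀ y, g y * hkCost κ x y + phiEnt (g y) =
          ENNReal.ofReal (s * kf κ x y * Real.log s - s * kf κ x y + 1) := hptw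
      rw [lintegral_congr fun y => this y]
      have hint : Integrable (fun y => kf κ x y) ν := integrable_kf_right κ ν x
      rw [← ofReal_integral_eq_lintegral_ofReal]
      · congr 1
        have hcg : ∀ y : X, s * kf κ x y * Real.log s - s * kf κ x y + 1 =
            (s * Real.log s) * kf κ x y - s * kf κ x y + 1 := fun y => by ring
        rw [integral_congr_ae (Filter.Eventually.of_forall hcg)]
        have hxint : Integrable (fun y => (s * Real.log s) * kf κ x y - s * kf κ x y) ν :=
          (hint.const_mul _).sub (hint.const_mul _)
        have h8 : ∫ y, ((s * Real.log s) * kf κ x y - s * kf κ x y + 1) ∂ν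
            = (∫ y, ((s * Real.log s) * kf κ x y - s * kf κ x y) ∂ν)
              + (ν Set.univ).toReal := by
          rw [integral_add hxint (integrable_const 1)]
          simp [Measure.real]
        have h9 : ∫ y, ((s * Real.log s) * kf κ x y - s * kf κ x y) ∂ν
            = (s * Real.log s) * Cx - s * Cx := by
          rw [integral_sub (hint.const_mul _) (hint.const_mul _), integral_const_mul,
            integral_const_mul]
          have hxx : (∫ y, kf κ x y ∂ν) = Cx := rfl
          rw [hxx]
        rw [h8, h9, hN]
      · apply Integrable.add _ (integrable_const 1)
        exact ((hint.const_mul _).mul_const _).sub (hint.const_mul _)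
      · filter_upwards with y
        simp only [Pi.zero_apply]
        have hkn : 0 ≤ kf κ x y := kf_nonneg x y
        have h1 : 0 ≤ s * kf κ x y * (- Real.log (kf κ x y)) := by
          rcases hkn.eq_or_lt with h | h
          · rw [← h]; simp
          · exact mul_nonneg (mul_nonneg hs.le hkn)
              (neg_nonneg.mpr (Real.log_nonpos hkn (kf_le_one x y)))
        have h2 : 0 ≤ phir (s * kf κ x y) := phir_nonneg (mul_nonneg hs.le hkn)
        have h3 := ptid hs hkn (s := s)
        linarith
    refine le_trans hle ?_
    rw [add_right_comm, hsum, hKL1, ← ENNReal.ofReal_add ?h1 ?h2]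
    · apply ENNReal.ofReal_le_ofReal
      have h5 : s * Cx = Real.sqrt Cx := by rw [hs_def, inv_mul_eq_div, Real.div_sqrt]
      have h6 : Real.log s = - Real.log (Real.sqrt Cx) := by rw [hs_def, Real.log_inv]
      have h7 : (s * Real.log s) * Cx = - Real.sqrt Cx * Real.log (Real.sqrt Cx) := by
        calc (s * Real.log s) * Cx = (s * Cx) * Real.log s := by ring
          _ = - Real.sqrt Cx * Real.log (Real.sqrt Cx) := by rw [h5, h6]; ring
      rw [phir, h7, h5]
      linarith
    case h1 =>
      have h5 : s * Cx = Real.sqrt Cx := by rw [hs_def, inv_mul_eq_div, Real.div_sqrt]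
      have h5 : s * Cx = Real.sqrt Cx := by rw [hs_def, inv_mul_eq_div, Real.div_sqrt]
      have h6 : Real.log s = - Real.log (Real.sqrt Cx) := by rw [hs_def, Real.log_inv]
      have h7 : (s * Real.log s) * Cx = - (Real.sqrt Cx * Real.log (Real.sqrt Cx)) := by
        calc (s * Real.log s) * Cx = (s * Cx) * Real.log s := by ring
          _ = - (Real.sqrt Cx * Real.log (Real.sqrt Cx)) := by rw [h5, h6]; ring
      have hlog : Real.log (Real.sqrt Cx) ≤ Real.sqrt Cx - 1 :=
        Real.log_le_sub_one_of_pos hsq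
      have hrsq : Real.sqrt Cx ^ 2 ≤ N := by
        rw [Real.sq_sqrt hC0]; exact Cre_le κ ν x
      nlinarith [mul_le_mul_of_nonneg_left hlog hsq.le, hrsq, hsq]
    case h2 => exact phir_nonneg (Real.sqrt_nonneg _)

end Formula

end HKaux

namespace HKaux

section Formula2

variable {X : Type*} [MetricSpace X] [MeasurableSpace X] [BorelSpace X]
  [SecondCountableTopology X] [CompactSpace X]

lemma kf_zero_hkCost_top {κ : ℝ} (hκ : 0 < κ) {x y : X} (hk : kf κ x y = 0) :
    hkCost κ x y = ⊤ := by
  by_cases h : dist x y < κ * π / 2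
  · exact absurd hk (kf_pos_of_lt hκ h).ne'
  · exact hkCost_eq_top hκ h

lemma kf_ne_zero_dist_lt {κ : ℝ} (hκ : 0 < κ) {x y : X} (hk : kf κ x y ≠ 0) :
    dist x y < κ * π / 2 := by
  by_contra h
  exact hk (kf_eq_zero_of_ge hκ h)

lemma HK2_dirac_ge {κ : ℝ} (hκ : 0 < κ) (x : X) (ν : Measure X) [IsFiniteMeasure ν] :
    ENNReal.ofReal (1 + (ν Set.univ).toReal - 2 * Real.sqrt (Cre κ ν x)) ≤
      HK2 κ (Measure.dirac x) ν := by
  set N := (ν Set.univ).toReal with hN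
  have hN0 : 0 ≤ N := ENNReal.toReal_nonneg
  set Cx := Cre κ ν x with hCx
  have hC0 : 0 ≤ Cx := Cre_nonneg κ ν x
  rw [HK2]
  refine le_iInf fun γ => le_iInf fun hγfin => ?_
  haveI := hγfin
  by_cases h1 : γ.map Prod.fst ≪ Measure.dirac x
  swap
  · rw [KLdiv, if_neg h1]; simp
  by_cases h2 : γ.map Prod.snd ≪ ν
  swap
  · have hk2 : KLdiv (γ.map Prod.snd) ν = ⊤ := by rw [KLdiv, if_neg h2]
    rw [hk2]; simp
  -- identify first marginal
  have hfst : γ.map Prod.fst = γ Set.univ • Measure.dirac x := by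
    have h := eq_smul_dirac_of_ac h1
    rwa [Measure.map_apply measurable_fst MeasurableSet.univ, Set.preimage_univ] at h
  have hKL1 : KLdiv (γ.map Prod.fst) (Measure.dirac x) = phiEnt (γ Set.univ) := by
    rw [hfst, KLdiv_smul_dirac x (measure_ne_top γ _)]
  set σ : Measure X := γ.map Prod.snd with hσ_def
  haveI : IsFiniteMeasure σ := by
    constructor
    rw [hσ_def, Measure.map_apply measurable_snd MeasurableSet.univ, Set.preimage_univ]
    exact measure_lt_top γ _
  set f : X → ℝ≥0∞ := σ.rnDeriv ν with hf_def
  have hf : Measurable f := Measure.measurable_rnDeriv σ ν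
  have hσν : ν.withDensity f = σ := Measure.withDensity_rnDeriv_eq σ ν h2
  have hKL2 : KLdiv (γ.map Prod.snd) ν = ∫⁻ y, phiEnt (f y) ∂ν := by
    rw [KLdiv, if_pos h2]
  have hmass : ∫⁻ y, f y ∂ν = γ Set.univ := by
    rw [hf_def, Measure.lintegral_rnDeriv h2, hσ_def,
      Measure.map_apply measurable_snd MeasurableSet.univ, Set.preimage_univ]
  -- rewrite the cost
  have hae : ∀ᵐ p ∂γ, p.1 = x := by
    rw [ae_iff]
    have hset : {p : X × X | ¬ p.1 = x} = Prod.fst ⁻¹' {x}ᶜ := rfl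
    rw [hset, ← Measure.map_apply measurable_fst (MeasurableSet.singleton x).compl, hfst]
    simp [Measure.dirac_apply' _ (MeasurableSet.singleton x).compl]
  have hcost : ∫⁻ p, hkCost κ p.1 p.2 ∂γ = ∫⁻ y, f y * hkCost κ x y ∂ν := by
    calc ∫⁻ p, hkCost κ p.1 p.2 ∂γ = ∫⁻ p : X × X, hkCost κ x p.2 ∂γ := by
          apply lintegral_congr_ae
          filter_upwards [hae] with p hp
          rw [hp]
      _ = ∫⁻ y, hkCost κ x y ∂σ := by
          rw [hσ_def, lintegral_map (measurable_hkCost_right κ x) measurable_snd]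
      _ = ∫⁻ y, f y * hkCost κ x y ∂ν := by
          rw [← hσν, lintegral_withDensity_eq_lintegral_mul ν hf
            (measurable_hkCost_right κ x)]
          rfl
  have hmeas : Measurable fun y => f y * hkCost κ x y + phiEnt (f y) :=
    (hf.mul (measurable_hkCost_right κ x)).add (measurable_phiEnt.comp hf)
  have hsplit : (∫⁻ p, hkCost κ p.1 p.2 ∂γ) + KLdiv (γ.map Prod.fst) (Measure.dirac x) +
      KLdiv (γ.map Prod.snd) ν =
      (∫⁻ y, (f y * hkCost κ x y + phiEnt (f y)) ∂ν) + phiEnt (γ Set.univ) := by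
    rw [hcost, hKL1, hKL2, add_right_comm,
      lintegral_add_left (f := fun y => f y * hkCost κ x y) (hf.mul (measurable_hkCost_right κ x))]
  rw [hsplit]
  rcases hC0.eq_or_lt with hCz | hC
  · -- C = 0
    have hk0ae : ∀ᵐ y ∂ν, kf κ x y = 0 := by
      have hint := integrable_kf_right κ ν x
      have h := (integral_eq_zero_iff_of_nonneg (fun y => kf_nonneg x y) hint).mp
        (by rw [show (∫ y, kf κ x y ∂ν) = Cx from rfl, ← hCz])
      filter_upwards [h] with y hy
      simpa using hy
    have hptw : ∀ᵐ y ∂ν, (1 : ℝ≥0∞) + ⊤ * f y ≤ f y * hkCost κ x y + phiEnt (f y) := by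
      filter_upwards [hk0ae] with y hy
      rw [kf_zero_hkCost_top hκ hy]
      rcases eq_or_ne (f y) 0 with hz | hz
      · simp [hz, phiEnt]
      · rw [ENNReal.top_mul hz, ENNReal.mul_top hz]
        simp
    have hge : ν Set.univ + ⊤ * γ Set.univ ≤ ∫⁻ y, (f y * hkCost κ x y + phiEnt (f y)) ∂ν := by
      calc ν Set.univ + ⊤ * γ Set.univ = ∫⁻ y, ((1 : ℝ≥0∞) + ⊤ * f y) ∂ν := by
            rw [lintegral_add_left measurable_const, lintegral_const_mul ⊤ hf, hmass,
              lintegral_one]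
        _ ≤ _ := lintegral_mono_ae hptw
    rcases eq_or_ne (γ Set.univ) 0 with hm | hm
    · rw [hm, phiEnt]
      simp only [if_pos rfl]
      rw [hm, mul_zero, add_zero] at hge
      refine le_trans ?_ (add_le_add_left hge 1)
      rw [← hCz, Real.sqrt_zero, mul_zero, sub_zero,
        ENNReal.ofReal_add zero_le_one hN0, ENNReal.ofReal_one, hN,
        ENNReal.ofReal_toReal (measure_ne_top ν _), add_comm]
    · have : (⊤ : ℝ≥0∞) * γ Set.univ = ⊤ := ENNReal.top_mul hm
      rw [this] at hge
      simp only [add_top] at hge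
      rw [top_le_iff] at hge
      rw [hge]
      simp
  · -- C > 0
    set s : ℝ := (Real.sqrt Cx)⁻¹ with hs_def
    have hsq : 0 < Real.sqrt Cx := Real.sqrt_pos.mpr hC
    have hs : 0 < s := inv_pos.mpr hsq
    set L : ℝ := Real.log s with hL_def
    set A2 := ∫⁻ y, (f y * hkCost κ x y + phiEnt (f y)) ∂ν with hA2_def
    rcases eq_or_ne A2 ⊤ with hA2 | hA2
    · rw [hA2]; simp
    have haefin : ∀ᵐ y ∂ν, f y * hkCost κ x y + phiEnt (f y) < ⊤ := ae_lt_top hmeas hA2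
    have hflt : ∀ᵐ y ∂ν, f y < ⊤ := Measure.rnDeriv_lt_top σ ν
    have hzero : ∀ᵐ y ∂ν, kf κ x y = 0 → f y = 0 := by
      filter_upwards [haefin] with y hy hk
      by_contra hz
      rw [kf_zero_hkCost_top hκ hk, ENNReal.mul_top hz] at hy
      simp at hy
    set F1 : X → ℝ := fun y => if kf κ x y = 0 then 1
      else (f y).toReal * (- Real.log (kf κ x y)) + phir ((f y).toReal) with hF1_def
    have hF1meas : Measurable F1 := by
      apply Measurable.ite
      · exact (continuous_kf_right κ x).measurable (measurableSet_singleton 0)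
      · exact measurable_const
      · apply Measurable.add
        · exact (ENNReal.measurable_toReal.comp hf).mul
            ((Real.measurable_log.comp (continuous_kf_right κ x).measurable).neg)
        · have : Measurable phir := by
            unfold phir
            exact ((measurable_id.mul Real.measurable_log).sub measurable_id).add
              measurable_const
          exact this.comp (ENNReal.measurable_toReal.comp hf)
    have hF1nn : ∀ y, 0 ≤ F1 y := by
      intro y
      simp only [hF1_def]
      by_cases hk : kf κ x y = 0
      · rw [if_pos hk]; norm_num
      · rw [if_neg hk]
        have hkpos : 0 < kf κ x y := (kf_nonneg x y).lt_of_ne (Ne.symm hk)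
        have h1 : 0 ≤ (f y).toReal * (- Real.log (kf κ x y)) :=
          mul_nonneg ENNReal.toReal_nonneg
            (neg_nonneg.mpr (Real.log_nonpos hkpos.le (kf_le_one x y)))
        have h2 : 0 ≤ phir ((f y).toReal) := phir_nonneg ENNReal.toReal_nonneg
        linarith
    have haeq : ∀ᵐ y ∂ν, f y * hkCost κ x y + phiEnt (f y) = ENNReal.ofReal (F1 y) := by
      filter_upwards [hflt, hzero] with y hy1 hy2
      by_cases hk : kf κ x y = 0
      · simp only [hF1_def]
        simp only [if_pos hk]
        rw [kf_zero_hkCost_top hκ hk, hy2 hk]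
        simp [phiEnt]
      · have hkpos : 0 < kf κ x y := (kf_nonneg x y).lt_of_ne (Ne.symm hk)
        have hdist := kf_ne_zero_dist_lt hκ hk
        have ht : (f y) = ENNReal.ofReal ((f y).toReal) :=
          (ENNReal.ofReal_toReal hy1.ne).symm
        have hlognn : 0 ≤ - Real.log (kf κ x y) :=
          neg_nonneg.mpr (Real.log_nonpos hkpos.le (kf_le_one x y))
        simp only [hF1_def]
        simp only [if_neg hk]
        rw [hkCost_eq_of_lt hκ hdist, ht, ← ENNReal.ofReal_mul ENNReal.toReal_nonneg,
          phiEnt_ofReal ENNReal.toReal_nonneg,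
          ← ENNReal.ofReal_add (mul_nonneg ENNReal.toReal_nonneg hlognn)
            (phir_nonneg ENNReal.toReal_nonneg),
          ENNReal.toReal_ofReal ENNReal.toReal_nonneg]
    have hA2F : A2 = ∫⁻ y, ENNReal.ofReal (F1 y) ∂ν := lintegral_congr_ae haeq
    have hInt : Integrable F1 ν := by
      constructor
      · exact hF1meas.aestronglyMeasurable
      · rw [hasFiniteIntegral_iff_ofReal (Filter.Eventually.of_forall hF1nn)]
        rw [← hA2F]
        exact hA2.lt_top
    have hA2eq : A2 = ENNReal.ofReal (∫ y, F1 y ∂ν) := by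
      rw [hA2F, ofReal_integral_eq_lintegral_ofReal hInt
        (Filter.Eventually.of_forall hF1nn)]
    set M := (γ Set.univ).toReal with hM_def
    have hM0 : 0 ≤ M := ENNReal.toReal_nonneg
    have hintf : Integrable (fun y => (f y).toReal) ν :=
      integrable_toReal_of_lintegral_ne_top hf.aemeasurable
        (by rw [hmass]; exact measure_ne_top γ _)
    have hMI : ∫ y, (f y).toReal ∂ν = M := by
      rw [integral_toReal hf.aemeasurable hflt, hmass]
    -- pointwise real bound
    have hptw : ∀ᵐ y ∂ν, 1 - s * kf κ x y + (f y).toReal * L ≤ F1 y := by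
      filter_upwards [hzero] with y hy
      by_cases hk : kf κ x y = 0
      · simp only [hF1_def]
        simp only [if_pos hk]
        rw [hk, hy hk]
        simp
      · have hkpos : 0 < kf κ x y := (kf_nonneg x y).lt_of_ne (Ne.symm hk)
        simp only [hF1_def]
        simp only [if_neg hk]
        set t := (f y).toReal with ht_def
        have ht0 : 0 ≤ t := ENNReal.toReal_nonneg
        have hsk : 0 < s * kf κ x y := mul_pos hs hkpos
        have hl1 := L1 ht0 hsk
        have hlogmul : Real.log (s * kf κ x y) = L + Real.log (kf κ x y) := by
          rw [hL_def, Real.log_mul hs.ne' hk]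
        rw [phir]
        rcases ht0.eq_or_lt with h | h
        · rw [← h]
          simp only [zero_mul, zero_sub, zero_add]
          nlinarith [hsk]
        · rw [hlogmul] at hl1
          nlinarith [hl1]
    have hlb : (ν Set.univ).toReal - s * Cx + M * L ≤ ∫ y, F1 y ∂ν := by
      have hRHSint : Integrable (fun y => 1 - s * kf κ x y + (f y).toReal * L) ν := by
        apply Integrable.add
        · exact (integrable_const 1).sub ((integrable_kf_right κ ν x).const_mul s)
        · exact hintf.mul_const L
      have h := integral_mono_ae hRHSint hInt hptw
      have heval : ∫ y, (1 - s * kf κ x y + (f y).toReal * L) ∂ν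
          = (ν Set.univ).toReal - s * Cx + M * L := by
        have i1 : Integrable (fun y => (1:ℝ) - s * kf κ x y) ν :=
          (integrable_const 1).sub ((integrable_kf_right κ ν x).const_mul s)
        rw [integral_add i1 (hintf.mul_const L),
          integral_sub (integrable_const 1) ((integrable_kf_right κ ν x).const_mul s),
          integral_const_mul, integral_mul_const, hMI, integral_const]
        have hxx : (∫ y, kf κ x y ∂ν) = Cx := rfl
        rw [hxx]
        simp [Measure.real]
      rw [heval] at h
      exact h
    -- conclude
    have hsCx : s * Cx = Real.sqrt Cx := by rw [hs_def, inv_mul_eq_div, Real.div_sqrt]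
    have h11 : 0 ≤ M * L + M * Real.log M - M + Real.sqrt Cx := by
      have := L1 hM0 hsq
      have hLeq : L = - Real.log (Real.sqrt Cx) := by rw [hL_def, hs_def, Real.log_inv]
      nlinarith [this]
    rw [hA2eq, phiEnt_eq (measure_ne_top γ _), ← hM_def,
      ← ENNReal.ofReal_add (integral_nonneg hF1nn) (phir_nonneg hM0)]
    apply ENNReal.ofReal_le_ofReal
    rw [phir]
    rw [hsCx] at hlb
    rw [← hN] at hlb
    linarith
end Formula2

end HKaux

namespace HKaux

section RealLemmas

lemma amgm {a c : ℝ} (ha : 0 < a) (hc : 0 ≤ c) : 2 * Real.sqrt c ≤ a + c / a := by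
  rw [← sub_nonneg]
  have h1 : a + c / a - 2 * Real.sqrt c = (a - Real.sqrt c) ^ 2 / a := by
    field_simp
    nlinarith [Real.sq_sqrt hc]
  rw [h1]
  positivity

lemma amgm_eq {a c : ℝ} (ha : 0 < a) (hc : 0 ≤ c)
    (h : a + c / a - 2 * Real.sqrt c = 0) : a = Real.sqrt c := by
  have h1 : (a - Real.sqrt c) ^ 2 / a = 0 := by
    rw [← h]
    field_simp
    nlinarith [Real.sq_sqrt hc]
  have h2 : (a - Real.sqrt c) ^ 2 = 0 := (div_eq_zero_iff.mp h1).resolve_right ha.ne'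
  have := sq_eq_zero_iff.mp h2
  linarith

lemma sqrt_add_sq_le {a e : ℝ} (ha : 0 ≤ a) (he : 0 ≤ e) :
    Real.sqrt (a + e ^ 2) ≤ Real.sqrt a + e := by
  have h1 : a + e ^ 2 ≤ (Real.sqrt a + e) ^ 2 := by
    nlinarith [Real.sq_sqrt ha, Real.sqrt_nonneg a]
  calc Real.sqrt (a + e ^ 2) ≤ Real.sqrt ((Real.sqrt a + e) ^ 2) := Real.sqrt_le_sqrt h1
    _ = Real.sqrt a + e := Real.sqrt_sq (by positivity)

lemma sqrt_pert {a b e : ℝ} (ha : 0 ≤ a) (hb : 0 ≤ b) (hbe : b ≤ e) (he : 0 < e) :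
    b / (2 * Real.sqrt (a + e)) ≤ Real.sqrt (a + b) - Real.sqrt a := by
  have hae : 0 < Real.sqrt (a + e) := Real.sqrt_pos.mpr (by linarith)
  rw [div_le_iff₀ (by positivity)]
  have hD : 0 ≤ Real.sqrt (a + b) - Real.sqrt a :=
    sub_nonneg.mpr (Real.sqrt_le_sqrt (by linarith))
  have h1 : (Real.sqrt (a + b) - Real.sqrt a) * (Real.sqrt (a + b) + Real.sqrt a) = b := by
    have := Real.sq_sqrt (show 0 ≤ a + b by linarith)
    have := Real.sq_sqrt ha
    nlinarith
  have h2 : Real.sqrt (a + b) + Real.sqrt a ≤ 2 * Real.sqrt (a + e) := by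
    have := Real.sqrt_le_sqrt (show a + b ≤ a + e by linarith)
    have := Real.sqrt_le_sqrt (show a ≤ a + e by linarith)
    linarith
  nlinarith

lemma sqrt_one_add_ge {t : ℝ} (ht0 : 0 < t) (ht1 : t ≤ 1) :
    1 + t / 2 - t ^ 2 / 8 ≤ Real.sqrt (1 + t) := by
  have h1 : (1 + t / 2 - t ^ 2 / 8) ^ 2 ≤ 1 + t := by
    nlinarith [mul_le_mul_of_nonneg_left ht1 (show (0:ℝ) ≤ t ^ 3 by positivity)]
  calc 1 + t / 2 - t ^ 2 / 8 = Real.sqrt ((1 + t / 2 - t ^ 2 / 8) ^ 2) :=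
        (Real.sqrt_sq (by nlinarith)).symm
    _ ≤ Real.sqrt (1 + t) := Real.sqrt_le_sqrt h1

lemma sqrt_one_add_le {t : ℝ} (ht : -1 < t) : Real.sqrt (1 + t) ≤ 1 + t / 2 := by
  have h1 : 1 + t ≤ (1 + t / 2) ^ 2 := by nlinarith [sq_nonneg t]
  calc Real.sqrt (1 + t) ≤ Real.sqrt ((1 + t / 2) ^ 2) := Real.sqrt_le_sqrt h1
    _ = 1 + t / 2 := Real.sqrt_sq (by nlinarith)

lemma sqrt_one_add_ge_neg {t : ℝ} (ht0 : -1 < t) (ht1 : t < 0) :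
    1 + t / 2 - t ^ 2 / 2 ≤ Real.sqrt (1 + t) := by
  rcases le_or_gt (1 + t / 2 - t ^ 2 / 2) 0 with h | h
  · exact h.trans (Real.sqrt_nonneg _)
  · have h1 : (1 + t / 2 - t ^ 2 / 2) ^ 2 ≤ 1 + t := by nlinarith
    calc 1 + t / 2 - t ^ 2 / 2 = Real.sqrt ((1 + t / 2 - t ^ 2 / 2) ^ 2) :=
          (Real.sqrt_sq h.le).symm
      _ ≤ Real.sqrt (1 + t) := Real.sqrt_le_sqrt h1

end RealLemmas

section Duality

variable {X : Type*} [MetricSpace X] [MeasurableSpace X] [BorelSpace X]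
  [SecondCountableTopology X] [CompactSpace X]

lemma integrable_of_continuous' {Y : Type*} [MeasurableSpace Y] [TopologicalSpace Y]
    [OpensMeasurableSpace Y] [CompactSpace Y] (μ : Measure Y) [IsFiniteMeasure μ]
    {f : Y → ℝ} (hf : Continuous f) : Integrable f μ :=
  hf.integrable_of_hasCompactSupport (HasCompactSupport.of_compactSpace f)

theorem HK2_dirac {κ : ℝ} (hκ : 0 < κ) (x : X) (ν : Measure X) [IsFiniteMeasure ν] :
    HK2 κ (Measure.dirac x) ν =
      ENNReal.ofReal (1 + (ν Set.univ).toReal - 2 * Real.sqrt (Cre κ ν x)) :=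
  le_antisymm (HK2_dirac_le hκ x ν) (HK2_dirac_ge hκ x ν)

/-- The real-valued objective. -/
def Jr {X : Type*} [PseudoMetricSpace X] [MeasurableSpace X] (κ : ℝ) (ρ ν : Measure X) : ℝ :=
  1 + (ν Set.univ).toReal - 2 * ∫ x, Real.sqrt (Cre κ ν x) ∂ρ

lemma continuous_sqrt_Cre (κ : ℝ) (ν : Measure X) [IsFiniteMeasure ν] :
    Continuous fun x => Real.sqrt (Cre κ ν x) :=
  Real.continuous_sqrt.comp (continuous_Cre κ ν)

lemma Jr_eq_integral (κ : ℝ) (ρ : Measure X) [IsProbabilityMeasure ρ]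
    (ν : Measure X) [IsFiniteMeasure ν] :
    Jr κ ρ ν = ∫ x, (1 + (ν Set.univ).toReal - 2 * Real.sqrt (Cre κ ν x)) ∂ρ := by
  have hint : Integrable (fun x => Real.sqrt (Cre κ ν x)) ρ :=
    integrable_of_continuous ρ (continuous_sqrt_Cre κ ν)
  have i1 : Integrable (fun _ : X => 1 + (ν Set.univ).toReal) ρ := integrable_const _
  rw [show (fun x => 1 + (ν Set.univ).toReal - 2 * Real.sqrt (Cre κ ν x)) =
    (fun x => (1 + (ν Set.univ).toReal) - 2 * Real.sqrt (Cre κ ν x)) from rfl]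
  rw [integral_sub i1 (hint.const_mul 2), integral_const, integral_const_mul]
  simp [Jr]
  try ring

lemma Jr_nonneg (κ : ℝ) (ρ : Measure X) [IsProbabilityMeasure ρ]
    (ν : Measure X) [IsFiniteMeasure ν] : 0 ≤ Jr κ ρ ν := by
  rw [Jr_eq_integral]
  apply integral_nonneg
  intro x
  have := sqrt_Cre_le κ ν x
  simp only [Pi.zero_apply]
  linarith

theorem JDirac_eq {κ : ℝ} (hκ : 0 < κ) (ρ : Measure X) [IsProbabilityMeasure ρ]
    (ν : Measure X) [IsFiniteMeasure ν] :
    (∫⁻ x, HK2 κ (Measure.dirac x) ν ∂ρ) = ENNReal.ofReal (Jr κ ρ ν) := by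
  have h1 : (∫⁻ x, HK2 κ (Measure.dirac x) ν ∂ρ) =
      ∫⁻ x, ENNReal.ofReal (1 + (ν Set.univ).toReal - 2 * Real.sqrt (Cre κ ν x)) ∂ρ :=
    lintegral_congr fun x => HK2_dirac hκ x ν
  rw [h1, ← ofReal_integral_eq_lintegral_ofReal, ← Jr_eq_integral κ ρ ν]
  · apply Integrable.sub (integrable_const _)
    exact (integrable_of_continuous ρ (continuous_sqrt_Cre κ ν)).const_mul 2
  · filter_upwards with x
    have := sqrt_Cre_le κ ν x
    simp only [Pi.zero_apply]
    linarith

end Duality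

end HKaux


namespace HKaux

section Duality2

variable {X : Type*} [MetricSpace X] [MeasurableSpace X] [BorelSpace X]
  [SecondCountableTopology X] [CompactSpace X]

lemma Fcon_eq_kf (ρ : Measure X) (κ : ℝ) (ψ : X → ℝ) (y : X) :
    Fcon ρ κ ψ y = ∫ x, kf κ x y / (1 - ψ x) ∂ρ := rfl

lemma one_sub_pos {ψ : X → ℝ} (hlt : ∀ x, ψ x < 1) (x : X) : 0 < 1 - ψ x := by
  linarith [hlt x]

lemma continuous_Fcon (κ : ℝ) (ρ : Measure X) [IsFiniteMeasure ρ] {ψ : X → ℝ}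
    (hc : Continuous ψ) (hlt : ∀ x, ψ x < 1) : Continuous (Fcon ρ κ ψ) := by
  have hpos := one_sub_pos hlt
  apply continuous_of_dominated (bound := fun x => (1 - ψ x)⁻¹)
  · intro y
    exact ((continuous_kf_left κ y).div (continuous_const.sub hc)
      fun x => (hpos x).ne').aestronglyMeasurable
  · intro y
    filter_upwards with x
    have hkk : tcos (dist x y / κ) ^ 2 = kf κ x y := rfl
    rw [Real.norm_eq_abs, hkk,
      abs_of_nonneg (div_nonneg (kf_nonneg x y) (hpos x).le), ← one_div]
    exact (div_le_div_iff_of_pos_right (hpos x)).mpr (kf_le_one x y)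
  · exact integrable_of_continuous ρ ((continuous_const.sub hc).inv₀ fun x => (hpos x).ne')
  · filter_upwards with x
    exact (continuous_kf_right κ x).div_const _

lemma Fcon_nonneg (κ : ℝ) (ρ : Measure X) {ψ : X → ℝ} (hlt : ∀ x, ψ x < 1) (y : X) :
    0 ≤ Fcon ρ κ ψ y :=
  integral_nonneg fun x => div_nonneg (kf_nonneg x y) (one_sub_pos hlt x).le

lemma integrable_Fcon (κ : ℝ) (ρ : Measure X) [IsFiniteMeasure ρ] (ν : Measure X)
    [IsFiniteMeasure ν] {ψ : X → ℝ} (hc : Continuous ψ) (hlt : ∀ x, ψ x < 1) :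
    Integrable (Fcon ρ κ ψ) ν :=
  integrable_of_continuous ν (continuous_Fcon κ ρ hc hlt)

lemma fubini_Fcon (κ : ℝ) (ρ : Measure X) [IsFiniteMeasure ρ] (ν : Measure X)
    [IsFiniteMeasure ν] {ψ : X → ℝ} (hc : Continuous ψ) (hlt : ∀ x, ψ x < 1) :
    ∫ y, Fcon ρ κ ψ y ∂ν = ∫ x, Cre κ ν x / (1 - ψ x) ∂ρ := by
  have hpos := one_sub_pos hlt
  have hnum : Continuous fun p : X × X => kf κ p.2 p.1 := by
    unfold kf
    exact (continuous_tcos.comp ((continuous_snd.dist continuous_fst).div_const κ)).pow 2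
  have hcont : Continuous fun p : X × X => kf κ p.2 p.1 / (1 - ψ p.2) :=
    hnum.div (continuous_const.sub (hc.comp continuous_snd)) fun p => (hpos p.2).ne'
  have hint : Integrable (Function.uncurry fun y x => kf κ x y / (1 - ψ x)) (ν.prod ρ) :=
    integrable_of_continuous' (ν.prod ρ) hcont
  have hswap := integral_integral_swap hint
  calc ∫ y, Fcon ρ κ ψ y ∂ν = ∫ y, ∫ x, kf κ x y / (1 - ψ x) ∂ρ ∂ν := rfl
    _ = ∫ x, ∫ y, kf κ x y / (1 - ψ x) ∂ν ∂ρ := hswap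
    _ = ∫ x, Cre κ ν x / (1 - ψ x) ∂ρ := by
        apply integral_congr_ae
        filter_upwards with x
        rw [integral_div]
        rfl

lemma integrable_Cre_div (κ : ℝ) (ρ : Measure X) [IsFiniteMeasure ρ] (ν : Measure X)
    [IsFiniteMeasure ν] {ψ : X → ℝ} (hc : Continuous ψ) (hlt : ∀ x, ψ x < 1) :
    Integrable (fun x => Cre κ ν x / (1 - ψ x)) ρ :=
  integrable_of_continuous ρ ((continuous_Cre κ ν).div (continuous_const.sub hc)
    fun x => (one_sub_pos hlt x).ne')

/-- The key algebraic identity behind weak duality. -/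
lemma key_identity (κ : ℝ) (ρ : Measure X) [IsProbabilityMeasure ρ]
    (ν : Measure X) [IsFiniteMeasure ν] {ψ : X → ℝ}
    (hc : Continuous ψ) (hlt : ∀ x, ψ x < 1) :
    Jr κ ρ ν - ∫ x, ψ x ∂ρ =
      (∫ x, ((1 - ψ x) + Cre κ ν x / (1 - ψ x) - 2 * Real.sqrt (Cre κ ν x)) ∂ρ)
        + (∫ y, (1 - Fcon ρ κ ψ y) ∂ν) := by
  have hψint : Integrable ψ ρ := integrable_of_continuous ρ hc
  have hCdiv := integrable_Cre_div κ ρ ν hc hlt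
  have hsq : Integrable (fun x => Real.sqrt (Cre κ ν x)) ρ :=
    integrable_of_continuous ρ (continuous_sqrt_Cre κ ν)
  have hFc : Integrable (Fcon ρ κ ψ) ν := integrable_Fcon κ ρ ν hc hlt
  have e1 : ∫ x, ((1 - ψ x) + Cre κ ν x / (1 - ψ x) - 2 * Real.sqrt (Cre κ ν x)) ∂ρ
      = (1 - ∫ x, ψ x ∂ρ) + (∫ x, Cre κ ν x / (1 - ψ x) ∂ρ)
        - 2 * ∫ x, Real.sqrt (Cre κ ν x) ∂ρ := by
    have i1 : Integrable (fun x => (1 : ℝ) - ψ x) ρ := (integrable_const 1).sub hψint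
    have i2 : Integrable (fun x => (1 - ψ x) + Cre κ ν x / (1 - ψ x)) ρ := i1.add hCdiv
    rw [integral_sub i2 (hsq.const_mul 2), integral_add i1 hCdiv,
      integral_sub (integrable_const 1) hψint, integral_const_mul, integral_const]
    simp
  have e2 : ∫ y, (1 - Fcon ρ κ ψ y) ∂ν
      = (ν Set.univ).toReal - ∫ y, Fcon ρ κ ψ y ∂ν := by
    rw [integral_sub (integrable_const 1) hFc, integral_const]
    simp [Measure.real]
  have e3 := fubini_Fcon κ ρ ν hc hlt
  rw [e1, e2, e3, Jr]
  ring

lemma weak_duality (κ : ℝ) (ρ : Measure X) [IsProbabilityMeasure ρ]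
    (ν : Measure X) [IsFiniteMeasure ν] {ψ : X → ℝ} (hadm : DualAdm ρ κ ψ) :
    ∫ x, ψ x ∂ρ ≤ Jr κ ρ ν := by
  obtain ⟨hc, hlt, hF⟩ := hadm
  have hid := key_identity κ ρ ν hc hlt
  have hD1 : 0 ≤ ∫ x, ((1 - ψ x) + Cre κ ν x / (1 - ψ x) - 2 * Real.sqrt (Cre κ ν x)) ∂ρ := by
    apply integral_nonneg
    intro x
    have := amgm (one_sub_pos hlt x) (Cre_nonneg κ ν x)
    simp only [Pi.zero_apply]
    linarith
  have hD2 : 0 ≤ ∫ y, (1 - Fcon ρ κ ψ y) ∂ν :=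
    integral_nonneg fun y => sub_nonneg.mpr (hF y)
  linarith

lemma eq_of_conditions (κ : ℝ) (ρ : Measure X) [IsProbabilityMeasure ρ]
    (ν : Measure X) [IsFiniteMeasure ν] {ψ : X → ℝ}
    (hc : Continuous ψ) (hlt : ∀ x, ψ x < 1)
    (h1 : ∀ᵐ x ∂ρ, ψ x = 1 - Real.sqrt (Cre κ ν x))
    (h2 : ∀ᵐ y ∂ν, Fcon ρ κ ψ y = 1) :
    ∫ x, ψ x ∂ρ = Jr κ ρ ν := by
  have hid := key_identity κ ρ ν hc hlt
  have hD1 : ∫ x, ((1 - ψ x) + Cre κ ν x / (1 - ψ x) - 2 * Real.sqrt (Cre κ ν x)) ∂ρ = 0 := by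
    have hz : ∫ x, ((1 - ψ x) + Cre κ ν x / (1 - ψ x) - 2 * Real.sqrt (Cre κ ν x)) ∂ρ
        = ∫ _x, (0 : ℝ) ∂ρ := by
      apply integral_congr_ae
      filter_upwards [h1] with x hx
      rw [hx]
      have he : (1 : ℝ) - (1 - Real.sqrt (Cre κ ν x)) = Real.sqrt (Cre κ ν x) := by ring
      rw [he, Real.div_sqrt]
      ring
    rw [hz, integral_zero]
  have hD2 : ∫ y, (1 - Fcon ρ κ ψ y) ∂ν = 0 := by
    have hz : ∫ y, (1 - Fcon ρ κ ψ y) ∂ν = ∫ _y, (0 : ℝ) ∂ν := by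
      apply integral_congr_ae
      filter_upwards [h2] with y hy
      rw [hy]
      ring
    rw [hz, integral_zero]
  rw [hD1, hD2] at hid
  linarith

lemma conditions_of_eq (κ : ℝ) (ρ : Measure X) [IsProbabilityMeasure ρ]
    (ν : Measure X) [IsFiniteMeasure ν] {ψ : X → ℝ} (hadm : DualAdm ρ κ ψ)
    (heq : ∫ x, ψ x ∂ρ = Jr κ ρ ν) :
    (∀ᵐ x ∂ρ, ψ x = 1 - Real.sqrt (Cre κ ν x)) ∧ (∀ᵐ y ∂ν, Fcon ρ κ ψ y = 1) := by
  obtain ⟨hc, hlt, hF⟩ := hadm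
  have hid := key_identity κ ρ ν hc hlt
  have hn1 : ∀ x, 0 ≤ (1 - ψ x) + Cre κ ν x / (1 - ψ x) - 2 * Real.sqrt (Cre κ ν x) := by
    intro x
    have := amgm (one_sub_pos hlt x) (Cre_nonneg κ ν x)
    linarith
  have hi1 : Integrable (fun x => (1 - ψ x) + Cre κ ν x / (1 - ψ x)
      - 2 * Real.sqrt (Cre κ ν x)) ρ := by
    apply Integrable.sub
    · exact ((integrable_const 1).sub (integrable_of_continuous ρ hc)).add
        (integrable_Cre_div κ ρ ν hc hlt)
    · exact (integrable_of_continuous ρ (continuous_sqrt_Cre κ ν)).const_mul 2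
  have hn2 : ∀ y, 0 ≤ 1 - Fcon ρ κ ψ y := fun y => sub_nonneg.mpr (hF y)
  have hi2 : Integrable (fun y => 1 - Fcon ρ κ ψ y) ν :=
    (integrable_const 1).sub (integrable_Fcon κ ρ ν hc hlt)
  have hD1 : 0 ≤ ∫ x, ((1 - ψ x) + Cre κ ν x / (1 - ψ x) - 2 * Real.sqrt (Cre κ ν x)) ∂ρ :=
    integral_nonneg hn1
  have hD2 : 0 ≤ ∫ y, (1 - Fcon ρ κ ψ y) ∂ν := integral_nonneg hn2
  have hz1 : ∫ x, ((1 - ψ x) + Cre κ ν x / (1 - ψ x) - 2 * Real.sqrt (Cre κ ν x)) ∂ρ = 0 := by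
    linarith
  have hz2 : ∫ y, (1 - Fcon ρ κ ψ y) ∂ν = 0 := by linarith
  constructor
  · have := (integral_eq_zero_iff_of_nonneg hn1 hi1).mp hz1
    filter_upwards [this] with x hx
    simp only [Pi.zero_apply] at hx
    have := amgm_eq (one_sub_pos hlt x) (Cre_nonneg κ ν x) hx
    linarith
  · have := (integral_eq_zero_iff_of_nonneg hn2 hi2).mp hz2
    filter_upwards [this] with y hy
    simp only [Pi.zero_apply] at hy
    linarith

end Duality2

end HKaux

namespace HKaux

section FOC

variable {X : Type*} [MetricSpace X] [MeasurableSpace X] [BorelSpace X]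
  [SecondCountableTopology X] [CompactSpace X]

lemma finite_smul_dirac (y : X) {t : ℝ} :
    IsFiniteMeasure (ENNReal.ofReal t • Measure.dirac y) := by
  constructor
  rw [Measure.smul_apply, smul_eq_mul]
  exact ENNReal.mul_lt_top ofReal_lt_top (measure_lt_top _ _)

lemma Cre_add_dirac {κ : ℝ} (ν : Measure X) [IsFiniteMeasure ν] (y : X) {t : ℝ}
    (ht : 0 ≤ t) (x : X) :
    Cre κ (ν + ENNReal.ofReal t • Measure.dirac y) x = Cre κ ν x + t * kf κ x y := by
  haveI := finite_smul_dirac (t := t) y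
  unfold Cre
  rw [integral_add_measure (integrable_kf_right κ ν x)
    ((integrable_of_continuous' _ (continuous_kf_right κ x)))]
  rw [integral_smul_measure, integral_dirac]
  simp [ENNReal.toReal_ofReal ht, smul_eq_mul]

lemma mass_add_dirac (ν : Measure X) [IsFiniteMeasure ν] (y : X) {t : ℝ} (ht : 0 ≤ t) :
    (((ν + ENNReal.ofReal t • Measure.dirac y)) Set.univ).toReal
      = (ν Set.univ).toReal + t := by
  rw [Measure.add_apply, Measure.smul_apply, smul_eq_mul,
    measure_univ (μ := Measure.dirac y), mul_one,
    ENNReal.toReal_add (measure_ne_top ν _) ofReal_ne_top, ENNReal.toReal_ofReal ht]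

lemma Cre_smul {κ : ℝ} (ν : Measure X) {c : ℝ} (hc : 0 ≤ c) (x : X) :
    Cre κ (ENNReal.ofReal c • ν) x = c * Cre κ ν x := by
  unfold Cre
  rw [integral_smul_measure, ENNReal.toReal_ofReal hc, smul_eq_mul]

lemma FOC1 {κ : ℝ} (hκ : 0 < κ) (ρ : Measure X) [IsProbabilityMeasure ρ]
    (ν : Measure X) [IsFiniteMeasure ν]
    (hmin : ∀ ν' : Measure X, IsFiniteMeasure ν' → Jr κ ρ ν ≤ Jr κ ρ ν')
    (y : X) {t : ℝ} (ht : 0 < t) :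
    ∫ x, kf κ x y / Real.sqrt (Cre κ ν x + t) ∂ρ ≤ 1 := by
  set ν' : Measure X := ν + ENNReal.ofReal t • Measure.dirac y with hν'_def
  haveI : IsFiniteMeasure (ENNReal.ofReal t • Measure.dirac y) := finite_smul_dirac y
  haveI : IsFiniteMeasure ν' := by rw [hν'_def]; infer_instance
  have hJ := hmin ν' inferInstance
  have hcont1 : Continuous fun x => Real.sqrt (Cre κ ν x + t * kf κ x y) := by
    apply Real.continuous_sqrt.comp
    exact (continuous_Cre κ ν).add (continuous_const.mul (continuous_kf_left κ y))
  have hsqν' : ∫ x, Real.sqrt (Cre κ ν' x) ∂ρ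
      = ∫ x, Real.sqrt (Cre κ ν x + t * kf κ x y) ∂ρ := by
    apply integral_congr_ae
    filter_upwards with x
    rw [hν'_def, Cre_add_dirac ν y ht.le x]
  have hJr' : Jr κ ρ ν' = 1 + ((ν Set.univ).toReal + t)
      - 2 * ∫ x, Real.sqrt (Cre κ ν x + t * kf κ x y) ∂ρ := by
    rw [Jr, hsqν', hν'_def, mass_add_dirac ν y ht.le]
  rw [hJr', Jr] at hJ
  -- hJ : 1 + N - 2*S ≤ 1 + (N + t) - 2*∫√(C+t k)
  have hdiff : ∫ x, Real.sqrt (Cre κ ν x + t * kf κ x y) ∂ρ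
      - ∫ x, Real.sqrt (Cre κ ν x) ∂ρ ≤ t / 2 := by linarith
  have hintsub : Integrable (fun x => Real.sqrt (Cre κ ν x + t * kf κ x y)
      - Real.sqrt (Cre κ ν x)) ρ :=
    (integrable_of_continuous ρ hcont1).sub
      (integrable_of_continuous ρ (continuous_sqrt_Cre κ ν))
  have hptw : ∀ x, (t / 2) * (kf κ x y / Real.sqrt (Cre κ ν x + t))
      ≤ Real.sqrt (Cre κ ν x + t * kf κ x y) - Real.sqrt (Cre κ ν x) := by
    intro x
    have h := sqrt_pert (Cre_nonneg κ ν x) (mul_nonneg ht.le (kf_nonneg x y))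
      (by nlinarith [kf_le_one (κ := κ) x y, kf_nonneg (κ := κ) x y]) ht
    calc (t / 2) * (kf κ x y / Real.sqrt (Cre κ ν x + t))
        = t * kf κ x y / (2 * Real.sqrt (Cre κ ν x + t)) := by
          rw [div_mul_div_comm]
      _ ≤ _ := h
  have hintlhs : Integrable (fun x => (t / 2) * (kf κ x y / Real.sqrt (Cre κ ν x + t))) ρ := by
    apply Integrable.const_mul
    apply integrable_of_continuous ρ
    apply (continuous_kf_left κ y).div
      (Real.continuous_sqrt.comp ((continuous_Cre κ ν).add continuous_const))
    intro x
    have : 0 < Real.sqrt (Cre κ ν x + t) :=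
      Real.sqrt_pos.mpr (by linarith [Cre_nonneg κ ν x])
    exact this.ne'
  have hint2 : (t / 2) * ∫ x, kf κ x y / Real.sqrt (Cre κ ν x + t) ∂ρ ≤ t / 2 := by
    rw [← integral_const_mul]
    calc ∫ x, (t / 2) * (kf κ x y / Real.sqrt (Cre κ ν x + t)) ∂ρ
        ≤ ∫ x, (Real.sqrt (Cre κ ν x + t * kf κ x y) - Real.sqrt (Cre κ ν x)) ∂ρ :=
          integral_mono hintlhs hintsub hptw
      _ = ∫ x, Real.sqrt (Cre κ ν x + t * kf κ x y) ∂ρ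
          - ∫ x, Real.sqrt (Cre κ ν x) ∂ρ :=
          integral_sub (integrable_of_continuous ρ hcont1)
            (integrable_of_continuous ρ (continuous_sqrt_Cre κ ν))
      _ ≤ t / 2 := hdiff
  have ht2 : 0 < t / 2 := by linarith
  nlinarith [hint2]

lemma FOC2 {κ : ℝ} (hκ : 0 < κ) (ρ : Measure X) [IsProbabilityMeasure ρ]
    (ν : Measure X) [IsFiniteMeasure ν]
    (hmin : ∀ ν' : Measure X, IsFiniteMeasure ν' → Jr κ ρ ν ≤ Jr κ ρ ν') :
    ∫ x, Real.sqrt (Cre κ ν x) ∂ρ = (ν Set.univ).toReal := by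
  set S := ∫ x, Real.sqrt (Cre κ ν x) ∂ρ with hS_def
  set N := (ν Set.univ).toReal with hN_def
  have hS0 : 0 ≤ S := integral_nonneg fun x => Real.sqrt_nonneg _
  have hN0 : 0 ≤ N := ENNReal.toReal_nonneg
  have hscale : ∀ t : ℝ, -1 < t → 2 * (Real.sqrt (1 + t) - 1) * S ≤ t * N := by
    intro t ht
    have h1t : (0:ℝ) ≤ 1 + t := by linarith
    set ν' : Measure X := ENNReal.ofReal (1 + t) • ν with hν'_def
    haveI : IsFiniteMeasure ν' := by
      constructor
      rw [hν'_def, Measure.smul_apply, smul_eq_mul]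
      exact ENNReal.mul_lt_top ofReal_lt_top (measure_lt_top ν _)
    have hJ := hmin ν' inferInstance
    have hmassν' : (ν' Set.univ).toReal = (1 + t) * N := by
      rw [hν'_def, Measure.smul_apply, smul_eq_mul, ENNReal.toReal_mul,
        ENNReal.toReal_ofReal h1t, hN_def]
    have hsqν' : ∫ x, Real.sqrt (Cre κ ν' x) ∂ρ = Real.sqrt (1 + t) * S := by
      rw [hS_def, ← integral_const_mul]
      apply integral_congr_ae
      filter_upwards with x
      rw [hν'_def, Cre_smul ν h1t x, Real.sqrt_mul h1t]
    rw [Jr, Jr, hmassν', hsqν'] at hJ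
    rw [← hS_def, ← hN_def] at hJ
    nlinarith [hJ]
  have hSle : S ≤ N := by
    by_contra hcon
    push_neg at hcon
    have hSpos : 0 < S := lt_of_le_of_lt hN0 hcon
    have key : ∀ t : ℝ, 0 < t → t ≤ 1 → (1 - t / 4) * S ≤ N := by
      intro t ht0 ht1
      have h1 := hscale t (by linarith)
      have h2 := sqrt_one_add_ge ht0 ht1
      have h3 : (t - t ^ 2 / 4) * S ≤ 2 * (Real.sqrt (1 + t) - 1) * S := by
        apply mul_le_mul_of_nonneg_right _ hS0
        linarith
      nlinarith
    set t0 : ℝ := min 1 (2 * (S - N) / S) with ht0_def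
    have ht0pos : 0 < t0 := lt_min one_pos (div_pos (by linarith) hSpos)
    have ht0le : t0 ≤ 1 := min_le_left _ _
    have h4 := key t0 ht0pos ht0le
    have h5 : t0 ≤ 2 * (S - N) / S := min_le_right _ _
    have h6 : t0 * S ≤ 2 * (S - N) := (le_div_iff₀ hSpos).mp h5
    nlinarith
  have hNle : N ≤ S := by
    by_contra hcon
    push_neg at hcon
    have key : ∀ t : ℝ, -1 < t → t < 0 → N ≤ (1 - t) * S := by
      intro t htm ht0
      have h1 := hscale t htm
      have h2 := sqrt_one_add_ge_neg htm ht0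
      have h3 : (t - t ^ 2) * S ≤ 2 * (Real.sqrt (1 + t) - 1) * S := by
        apply mul_le_mul_of_nonneg_right _ hS0
        linarith
      nlinarith
    set u : ℝ := min (1/2) ((N - S) / (2 * (S + 1))) with hu_def
    have hupos : 0 < u := lt_min (by norm_num) (div_pos (by linarith) (by linarith))
    have hule : u ≤ 1/2 := min_le_left _ _
    have h4 := key (-u) (by linarith) (by linarith)
    have h5 : u ≤ (N - S) / (2 * (S + 1)) := min_le_right _ _
    have h6 : u * (2 * (S + 1)) ≤ N - S := (le_div_iff₀ (by linarith)).mp h5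
    nlinarith
  exact le_antisymm hSle hNle

end FOC

section Main

variable {X : Type*} [MetricSpace X] [MeasurableSpace X] [BorelSpace X]
  [SecondCountableTopology X] [CompactSpace X]

theorem main_general {κ : ℝ} (hκ : 0 < κ) (ρ : Measure X) [IsProbabilityMeasure ρ]
    (ν : Measure X) [IsFiniteMeasure ν] (ψ : X → ℝ) (hψ : DualAdm ρ κ ψ) :
    (PrimalMin ρ κ ν ∧ DualOpt ρ κ ψ) ↔
      ((∀ᵐ x ∂ρ, ψ x = 1 - Real.sqrt (Cre κ ν x)) ∧ (∀ᵐ y ∂ν, Fcon ρ κ ψ y = 1)) := by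
  obtain ⟨hc, hlt, hF⟩ := hψ
  have hJD : ∀ (ν' : Measure X), IsFiniteMeasure ν' →
      JDirac ρ κ ν' = ENNReal.ofReal (Jr κ ρ ν') := by
    intro ν' hν'
    haveI := hν'
    exact JDirac_eq hκ ρ ν'
  constructor
  · rintro ⟨⟨_, hPmin⟩, ⟨_, hDmax⟩⟩
    have hmin : ∀ ν' : Measure X, IsFiniteMeasure ν' → Jr κ ρ ν ≤ Jr κ ρ ν' := by
      intro ν' hν'
      haveI := hν'
      have h := hPmin ν' hν'
      rw [hJD ν inferInstance, hJD ν' hν'] at h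
      exact (ENNReal.ofReal_le_ofReal_iff (Jr_nonneg κ ρ ν')).mp h
    set S := ∫ x, Real.sqrt (Cre κ ν x) ∂ρ with hS_def
    have hSN := FOC2 hκ ρ ν hmin
    have hψge : ∀ ε : ℝ, 0 < ε → 1 - S - ε ≤ ∫ x, ψ x ∂ρ := by
      intro ε hε
      set ψε : X → ℝ := fun x => 1 - Real.sqrt (Cre κ ν x + ε ^ 2) with hψε_def
      have hcε : Continuous ψε := by
        apply continuous_const.sub
        exact Real.continuous_sqrt.comp ((continuous_Cre κ ν).add continuous_const)
      have hltε : ∀ x, ψε x < 1 := by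
        intro x
        have : 0 < Real.sqrt (Cre κ ν x + ε ^ 2) :=
          Real.sqrt_pos.mpr (by nlinarith [Cre_nonneg κ ν x])
        show 1 - Real.sqrt (Cre κ ν x + ε ^ 2) < 1
        linarith
      have hFε : ∀ y, Fcon ρ κ ψε y ≤ 1 := by
        intro y
        have heqF : Fcon ρ κ ψε y = ∫ x, kf κ x y / Real.sqrt (Cre κ ν x + ε ^ 2) ∂ρ := by
          rw [Fcon_eq_kf]
          apply integral_congr_ae
          filter_upwards with x
          show kf κ x y / (1 - (1 - Real.sqrt (Cre κ ν x + ε ^ 2)))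
            = kf κ x y / Real.sqrt (Cre κ ν x + ε ^ 2)
          have hd : (1 : ℝ) - (1 - Real.sqrt (Cre κ ν x + ε ^ 2))
              = Real.sqrt (Cre κ ν x + ε ^ 2) := by ring
          rw [hd]
        rw [heqF]
        exact FOC1 hκ ρ ν hmin y (by positivity)
      have hle := hDmax ψε ⟨hcε, hltε, hFε⟩
      have hint1 : Integrable (fun x => Real.sqrt (Cre κ ν x + ε ^ 2)) ρ :=
        integrable_of_continuous ρ
          (Real.continuous_sqrt.comp ((continuous_Cre κ ν).add continuous_const))
      have hεint : ∫ x, ψε x ∂ρ = 1 - ∫ x, Real.sqrt (Cre κ ν x + ε ^ 2) ∂ρ := by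
        have : ∫ x, ψε x ∂ρ = ∫ x, (1 - Real.sqrt (Cre κ ν x + ε ^ 2)) ∂ρ := rfl
        rw [this, integral_sub (integrable_const 1) hint1, integral_const]
        simp
      have hbound : ∫ x, Real.sqrt (Cre κ ν x + ε ^ 2) ∂ρ ≤ S + ε := by
        have hint2 : Integrable (fun x => Real.sqrt (Cre κ ν x) + ε) ρ :=
          (integrable_of_continuous ρ (continuous_sqrt_Cre κ ν)).add (integrable_const ε)
        have hmono := integral_mono hint1 hint2
          (fun x => sqrt_add_sq_le (Cre_nonneg κ ν x) hε.le)
        rw [integral_add (integrable_of_continuous ρ (continuous_sqrt_Cre κ ν))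
          (integrable_const ε), integral_const] at hmono
        simpa [hS_def] using hmono
      linarith [hle, hεint.symm.le, hbound]
    have hup : ∫ x, ψ x ∂ρ ≤ Jr κ ρ ν := weak_duality κ ρ ν ⟨hc, hlt, hF⟩
    have hJrv : Jr κ ρ ν = 1 - S := by
      rw [Jr, ← hS_def, ← hSN]
      ring
    have hdown : 1 - S ≤ ∫ x, ψ x ∂ρ := by
      by_contra hcon
      push_neg at hcon
      set ε := (1 - S - ∫ x, ψ x ∂ρ) / 2 with hε_def
      have hεpos : 0 < ε := by rw [hε_def]; linarith
      have := hψge ε hεpos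
      rw [hε_def] at this
      linarith
    have heq : ∫ x, ψ x ∂ρ = Jr κ ρ ν := by rw [hJrv]; linarith
    exact conditions_of_eq κ ρ ν ⟨hc, hlt, hF⟩ heq
  · rintro ⟨h1, h2⟩
    have heq := eq_of_conditions κ ρ ν hc hlt h1 h2
    refine ⟨⟨inferInstance, ?_⟩, ⟨⟨hc, hlt, hF⟩, ?_⟩⟩
    · intro ν' hν'
      haveI := hν'
      rw [hJD ν inferInstance, hJD ν' hν']
      apply ENNReal.ofReal_le_ofReal
      rw [← heq]
      exact weak_duality κ ρ ν' ⟨hc, hlt, hF⟩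
    · intro ψ' hadm'
      calc ∫ x, ψ' x ∂ρ ≤ Jr κ ρ ν := weak_duality κ ρ ν hadm'
        _ = ∫ x, ψ x ∂ρ := heq.symm

end Main

end HKaux

/-- Primal-dual optimality conditions: an admissible pair is optimal iff the
complementarity relations hold. -/
theorem hk_dirac_optimality_conditions {d : ℕ} (Ω : Set (Ed d)) (hΩ₁ : IsCompact Ω)
    (hΩ₂ : Convex ℝ Ω) (hΩ₃ : (interior Ω).Nonempty)
    (ρ : Measure ↥Ω) [IsProbabilityMeasure ρ] (κ : ℝ) (hκ : 0 < κ)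
    (ν : Measure ↥Ω) [IsFiniteMeasure ν] (ψ : ↥Ω → ℝ) (hψ : DualAdm ρ κ ψ) :
    (PrimalMin ρ κ ν ∧ DualOpt ρ κ ψ) ↔
      ((∀ᵐ x ∂ρ, ψ x = 1 - Real.sqrt (∫ y, tcos (dist x y / κ) ^ 2 ∂ν)) ∧
       (∀ᵐ y ∂ν, Fcon ρ κ ψ y = 1)) := by
  haveI : CompactSpace (↥Ω) := isCompact_iff_compactSpace.mp hΩ₁
  exact HKaux.main_general hκ ρ ν ψ hψ

end
end
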